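/- arXiv:1703.04144 — 7 statements merged into one kernel-verified Lean document; each statement's English description precedes it below -/
import Mathlib

section
/- Let p : [0,∞) → [0,∞) be continuous, τ continuous with τ(t) < t, τ(t) → ∞, and h(t) = sup_{0 ≤ s ≤ t} τ(s). Then liminf_{t→∞} ∫_{h(t)}^t p(s) ds = liminf_{t→∞} ∫_{τ(t)}^t p(s) ds. -/
open Real Filter intervalIntegral

/-- With `p ≥ 0` continuous, `τ(t) < t`, `τ(t) → ∞`, and
`h(t) = sup_{0 ≤ s ≤ t} τ(s)`, the liminfs of `∫_{h(t)}^t p` and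
`∫_{τ(t)}^t p` as `t → ∞` coincide. -/
theorem stmt8 (p τ : ℝ → ℝ) (hpc : Continuous p)
    (hp : ∀ t, 0 ≤ t → 0 ≤ p t)
    (hτc : Continuous τ) (hτ : ∀ t, 0 ≤ t → τ t < t)
    (hτtop : Tendsto τ atTop atTop)
    (h : ℝ → ℝ) (hh : ∀ t, h t = sSup (τ '' Set.Icc 0 t)) :
    liminf (fun t => ∫ s in h t..t, p s) atTop =
      liminf (fun t => ∫ s in τ t..t, p s) atTop := by
  have hmax : ∀ t : ℝ, 0 ≤ t → ∃ x ∈ Set.Icc (0:ℝ) t, h t = τ x ∧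
      ∀ y ∈ Set.Icc (0:ℝ) t, τ y ≤ τ x := by
    intro t ht
    obtain ⟨x, hx, hxm⟩ := (isCompact_Icc).exists_isMaxOn ⟨0, le_refl 0, ht⟩ hτc.continuousOn
    refine ⟨x, hx, ?_, fun y hy => hxm hy⟩
    rw [hh t]
    exact IsGreatest.csSup_eq ⟨⟨x, hx, rfl⟩, by rintro _ ⟨y, hy, rfl⟩; exact hxm hy⟩
  rw [liminf_eq, liminf_eq]
  congr 1
  ext a
  simp only [Set.mem_setOf_eq]
  constructor
  · intro ha
    filter_upwards [ha, hτtop.eventually_ge_atTop 0, eventually_ge_atTop (0:ℝ)]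
      with t hat hτ0 ht0
    obtain ⟨x, hx, hhx, hxm⟩ := hmax t ht0
    have h1 : τ t ≤ h t := hhx ▸ hxm t ⟨ht0, le_refl t⟩
    have h2 : h t ≤ t := by
      rw [hhx]; exact le_trans (hτ x hx.1).le hx.2
    refine le_trans hat ?_
    rw [← integral_add_adjacent_intervals (hpc.intervalIntegrable (τ t) (h t))
      (hpc.intervalIntegrable (h t) t)]
    have : 0 ≤ ∫ s in τ t..h t, p s :=
      intervalIntegral.integral_nonneg h1 (fun y hy => hp y (hτ0.trans hy.1))
    linarith
  · intro ha
    obtain ⟨S, hS⟩ := (eventually_atTop).1 ha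
    filter_upwards [hτtop.eventually_ge_atTop S, eventually_ge_atTop (0:ℝ)] with t hτS ht0
    obtain ⟨x, hx, hhx, hxm⟩ := hmax t ht0
    have h1 : τ t ≤ h t := hhx ▸ hxm t ⟨ht0, le_refl t⟩
    have hxS : S ≤ x := le_trans hτS (le_trans h1 (by rw [hhx]; exact (hτ x hx.1).le))
    rw [hhx]
    calc a ≤ ∫ s in τ x..x, p s := hS x hxS
      _ ≤ ∫ s in τ x..t, p s := by
          rw [← integral_add_adjacent_intervals (hpc.intervalIntegrable (τ x) x)
            (hpc.intervalIntegrable x t)]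
          have : 0 ≤ ∫ s in x..t, p s :=
            intervalIntegral.integral_nonneg hx.2 (fun y hy => hp y (hx.1.trans hy.1))
          linarith
end

section
/- Suppose x is an eventually positive solution of x'(t) + Σ_{i=1}^m p_i(t) x(τ_i(t)) = 0, and suppose 0 < α := liminf_{t→∞} ∫_{τ(t)}^t Σ_i p_i(s) ds ≤ 1/e, where τ(t) = max_i τ_i(t). Let h(t) = max_i sup_{0≤s≤t} τ_i(s) and let λ₀ be the smaller root of λ = e^{αλ}. Then liminf_{t→∞} x(h(t))/x(t) ≥ λ₀. -/
open Real Filter intervalIntegral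

private noncomputable def lamSeq (α : ℝ) : ℕ → ℝ
  | 0 => 1
  | n+1 => Real.exp (α * lamSeq α n)


set_option maxHeartbeats 1000000 in
/-- If `x` is an eventually positive solution of
`x'(t) + ∑ pᵢ(t) x(τᵢ(t)) = 0`, `0 < α := liminf ∫_{τ(t)}^t ∑ pᵢ ≤ 1/e`
with `τ(t) = maxᵢ τᵢ(t)`, `h(t) = maxᵢ sup_{0≤s≤t} τᵢ(s)`, and `λ₀` the
smaller root of `λ = e^{αλ}`, then `liminf x(h(t))/x(t) ≥ λ₀`. -/
theorem stmt9 (m : ℕ) (hm : 1 ≤ m) (p τ : Fin m → ℝ → ℝ)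
    (hp : ∀ i t, 0 ≤ t → 0 ≤ p i t) (hpc : ∀ i, Continuous (p i))
    (hτ : ∀ i t, 0 ≤ t → τ i t < t) (hτc : ∀ i, Continuous (τ i))
    (hτtop : ∀ i, Tendsto (τ i) atTop atTop)
    (τmax : ℝ → ℝ) (hτmax : ∀ t, τmax t = ⨆ i, τ i t)
    (h : ℝ → ℝ)
    (hh : ∀ t, h t = sSup {y : ℝ | ∃ i : Fin m, ∃ s, 0 ≤ s ∧ s ≤ t ∧ y = τ i s})
    (x : ℝ → ℝ) (T₀ : ℝ) (hT₀ : 0 ≤ T₀)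
    (hsol : ∀ t, T₀ ≤ t → HasDerivAt x (-(∑ i, p i t * x (τ i t))) t)
    (hpos : ∃ T, T₀ ≤ T ∧ ∀ t, T ≤ t → 0 < x t ∧ ∀ i, 0 < x (τ i t))
    (α : ℝ)
    (hα : α = liminf (fun t => ∫ s in τmax t..t, ∑ i, p i s) atTop)
    (hα0 : 0 < α) (hα1 : α ≤ 1 / Real.exp 1)
    (lam₀ : ℝ)
    (hlam : IsLeast {lam : ℝ | 0 < lam ∧ lam = Real.exp (α * lam)} lam₀) :
    lam₀ ≤ liminf (fun t => x (h t) / x t) atTop := by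
  obtain ⟨T, hTT₀, hT⟩ := hpos
  have hT0 : (0:ℝ) ≤ T := le_trans hT₀ hTT₀
  set P : ℝ → ℝ := fun s => ∑ i, p i s with hP
  set g : ℝ → ℝ := fun s => ∑ i, p i s * x (τ i s) with hg
  set ratio : ℝ → ℝ := fun t => x (h t) / x t with hratio
  have i0 : Fin m := ⟨0, hm⟩
  haveI : Nonempty (Fin m) := ⟨i0⟩
  have hPc : Continuous P := continuous_finset_sum _ fun i _ => hpc i
  have hP0 : ∀ s, 0 ≤ s → 0 ≤ P s := fun s hs => Finset.sum_nonneg fun i _ => hp i s hs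
  -- the set A t
  have hA : ∀ t, {y : ℝ | ∃ i : Fin m, ∃ s, 0 ≤ s ∧ s ≤ t ∧ y = τ i s}
      = ⋃ i, τ i '' Set.Icc 0 t := by
    intro t; ext y; simp only [Set.mem_setOf_eq, Set.mem_iUnion, Set.mem_image, Set.mem_Icc]
    constructor
    · rintro ⟨i, s, h1, h2, h3⟩; exact ⟨i, s, ⟨h1, h2⟩, h3.symm⟩
    · rintro ⟨i, s, ⟨h1, h2⟩, h3⟩; exact ⟨i, s, h1, h2, h3.symm⟩
  have hAcpt : ∀ t, IsCompact (⋃ i : Fin m, τ i '' Set.Icc 0 t) := fun t =>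
    isCompact_iUnion fun i => (isCompact_Icc).image (hτc i)
  have hAne : ∀ t, 0 ≤ t → (⋃ i : Fin m, τ i '' Set.Icc 0 t).Nonempty := by
    intro t ht
    exact ⟨τ i0 t, Set.mem_iUnion.2 ⟨i0, Set.mem_image_of_mem _ ⟨ht, le_refl t⟩⟩⟩
  -- membership bound
  have hmemle : ∀ t, 0 ≤ t → ∀ i s, 0 ≤ s → s ≤ t → τ i s ≤ h t := by
    intro t ht i s hs hst
    rw [hh, hA]
    exact le_csSup (hAcpt t).bddAbove (Set.mem_iUnion.2 ⟨i, Set.mem_image_of_mem _ ⟨hs, hst⟩⟩)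
  have hhle : ∀ t, 0 ≤ t → h t ≤ t := by
    intro t ht
    rw [hh, hA]
    apply csSup_le (hAne t ht)
    rintro y hy
    simp only [Set.mem_iUnion, Set.mem_image, Set.mem_Icc] at hy
    obtain ⟨i, s, ⟨hs0, hst⟩, rfl⟩ := hy
    exact le_trans (le_of_lt (hτ i s hs0)) hst
  have hhmono : ∀ s t, 0 ≤ s → s ≤ t → h s ≤ h t := by
    intro s t hs hst
    rw [hh s, hA]
    apply csSup_le (hAne s hs)
    rintro y hy
    simp only [Set.mem_iUnion, Set.mem_image, Set.mem_Icc] at hy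
    obtain ⟨i, u, ⟨hu0, hus⟩, rfl⟩ := hy
    exact hmemle t (le_trans hs hst) i u hu0 (le_trans hus hst)
  have hhtop : Tendsto h atTop atTop := by
    apply tendsto_atTop_mono' atTop _ (hτtop i0)
    filter_upwards [eventually_ge_atTop (0:ℝ)] with t ht
    exact hmemle t ht i0 t ht le_rfl
  -- attainment
  have hatt : ∀ t, 0 ≤ t → ∃ s, 0 ≤ s ∧ s ≤ t ∧ h t = τmax s ∧ ∃ j, h t = τ j s := by
    intro t ht
    have hmem : h t ∈ ⋃ i : Fin m, τ i '' Set.Icc 0 t := by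
      rw [hh, hA]; exact (hAcpt t).sSup_mem (hAne t ht)
    simp only [Set.mem_iUnion, Set.mem_image, Set.mem_Icc] at hmem
    obtain ⟨j, s, ⟨hs0, hst⟩, hjs⟩ := hmem
    refine ⟨s, hs0, hst, ?_, j, hjs.symm⟩
    rw [hτmax]
    have hb : BddAbove (Set.range fun i => τ i s) := (Set.finite_range _).bddAbove
    apply le_antisymm
    · rw [← hjs]; exact le_ciSup hb j
    · exact ciSup_le fun i => hmemle t ht i s hs0 hst
  have hτmaxle : ∀ s, 0 ≤ s → τmax s ≤ s := by
    intro s hs; rw [hτmax]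
    exact ciSup_le fun i => le_of_lt (hτ i s hs)
  -- continuity of x on [T₀, ∞)
  have hxc : ∀ u, T₀ ≤ u → ContinuousAt x u := fun u hu => (hsol u hu).continuousAt
  -- x is antitone on [T, ∞)
  have hanti : AntitoneOn x (Set.Ici T) := by
    apply antitoneOn_of_deriv_nonpos (convex_Ici T)
    · exact fun u hu => (hxc u (le_trans hTT₀ hu)).continuousWithinAt
    · intro u hu
      rw [interior_Ici] at hu
      exact ((hsol u (le_trans hTT₀ (le_of_lt hu))).differentiableAt).differentiableWithinAt
    · intro u hu
      rw [interior_Ici] at hu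
      rw [(hsol u (le_trans hTT₀ (le_of_lt hu))).deriv]
      simp only [neg_nonpos]
      exact Finset.sum_nonneg fun i _ =>
        mul_nonneg (hp i u (le_trans hT0 (le_of_lt hu))) (le_of_lt ((hT u (le_of_lt hu)).2 i))
  -- threshold T₁: all delays ≥ T beyond T₁
  obtain ⟨T₁', hT₁'⟩ := eventually_atTop.1 (eventually_all.2 fun i => (hτtop i).eventually_ge_atTop T)
  set T₁ : ℝ := max T₁' T with hT₁def
  have hT₁T : T ≤ T₁ := le_max_right _ _
  have hT₁0 : (0:ℝ) ≤ T₁ := le_trans hT0 hT₁T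
  have hτge : ∀ s, T₁ ≤ s → ∀ i, T ≤ τ i s := fun s hs i => hT₁' s (le_trans (le_max_left _ _) hs) i
  -- continuity of g on [T₁, ∞)
  have hgc : ∀ u, T₁ ≤ u → ContinuousAt g u := by
    intro u hu
    have : ∀ i : Fin m, ContinuousAt (fun s => p i s * x (τ i s)) u := by
      intro i
      exact ContinuousAt.mul (hpc i).continuousAt
        (ContinuousAt.comp (hxc (τ i u) (le_trans hTT₀ (hτge u hu i))) (hτc i).continuousAt)
    exact tendsto_finset_sum _ fun i _ => this i
  have hgcOn : ∀ a b, T₁ ≤ a → ContinuousOn g (Set.Icc a b) := by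
    intro a b ha
    exact fun u hu => (hgc u (le_trans ha hu.1)).continuousWithinAt
  -- FTC
  have hftc : ∀ a b, T₁ ≤ a → a ≤ b → x b - x a = -∫ s in a..b, g s := by
    intro a b ha hab
    have h1 : ∀ u ∈ Set.uIcc a b, HasDerivAt x (-g u) u := by
      intro u hu
      rw [Set.uIcc_of_le hab] at hu
      exact hsol u (le_trans hTT₀ (le_trans hT₁T (le_trans ha hu.1)))
    have h2 : IntervalIntegrable (fun u => -g u) MeasureTheory.volume a b := by
      apply ContinuousOn.intervalIntegrable
      rw [Set.uIcc_of_le hab]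
      exact ((hgcOn a b ha).neg)
    have := intervalIntegral.integral_eq_sub_of_hasDerivAt h1 h2
    rw [← this, intervalIntegral.integral_neg]
  -- pointwise comparison: g s ≥ P s * x (h s) for s ≥ T₁
  have hgP : ∀ s, T₁ ≤ s → P s * x (h s) ≤ g s := by
    intro s hs
    have hs0 : (0:ℝ) ≤ s := le_trans hT₁0 hs
    rw [hP, hg, Finset.sum_mul]
    apply Finset.sum_le_sum
    intro i _
    apply mul_le_mul_of_nonneg_left _ (hp i s hs0)
    have hhsT : T ≤ h s := le_trans (hτge s hs i0) (hmemle s hs0 i0 s hs0 le_rfl)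
    exact hanti (Set.mem_Ici.2 (hτge s hs i)) (Set.mem_Ici.2 hhsT) (hmemle s hs0 i s hs0 le_rfl)
  -- τmax tends to infinity, eventually nonneg etc.
  have hτmaxge : ∀ s, τ i0 s ≤ τmax s := by
    intro s; rw [hτmax]
    exact le_ciSup (f := fun i => τ i s) (Set.finite_range _).bddAbove i0
  have hτmaxtop : Tendsto τmax atTop atTop := tendsto_atTop_mono hτmaxge (hτtop i0)
  have hPint : ∀ a b : ℝ, IntervalIntegrable P MeasureTheory.volume a b :=
    fun a b => hPc.intervalIntegrable a b
  -- the liminf integrand is eventually nonneg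
  have hbdd : IsBoundedUnder (· ≥ ·) atTop (fun t => ∫ s in τmax t..t, P s) := by
    refine ⟨0, ?_⟩
    simp only [eventually_map]
    filter_upwards [hτmaxtop.eventually_ge_atTop (0:ℝ), eventually_ge_atTop (0:ℝ)] with t h0 ht
    exact intervalIntegral.integral_nonneg (hτmaxle t ht) (fun u hu => hP0 u (le_trans h0 hu.1))
  -- eventual lower bound for the integral from τmax
  have hEτ : ∀ ε, 0 < ε → ∀ᶠ u in atTop, α - ε < ∫ s in τmax u..u, P s := by
    intro ε hε
    have hlt : α - ε < liminf (fun t => ∫ s in τmax t..t, P s) atTop := by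
      rw [← hα]; linarith
    exact Filter.eventually_lt_of_lt_liminf hlt hbdd
  -- eventual lower bound for the integral from h t
  have hEh : ∀ ε, 0 < ε → ∀ᶠ t in atTop, α - ε ≤ ∫ s in h t..t, P s := by
    intro ε hε
    obtain ⟨R₀, hR₀⟩ := eventually_atTop.1 (hEτ ε hε)
    set R : ℝ := max R₀ 0 with hRdef
    have hR0 : (0:ℝ) ≤ R := le_max_right _ _
    filter_upwards [hhtop.eventually_gt_atTop (h R), eventually_ge_atTop (0:ℝ)] with t hhR ht0
    obtain ⟨s, hs0, hst, hts, j, hj⟩ := hatt t ht0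
    have hsR : R < s := by
      by_contra hc
      push_neg at hc
      exact absurd (hj ▸ hmemle R hR0 j s hs0 hc) (not_le.2 hhR)
    have hsplit : (∫ u in h t..s, P u) + ∫ u in s..t, P u = ∫ u in h t..t, P u :=
      intervalIntegral.integral_add_adjacent_intervals (hPint _ _) (hPint _ _)
    have h1 : α - ε < ∫ u in h t..s, P u := by
      rw [hts]
      exact hR₀ s (le_trans (le_max_left _ _) (le_of_lt hsR))
    have h2 : (0:ℝ) ≤ ∫ u in s..t, P u :=
      intervalIntegral.integral_nonneg hst (fun u hu => hP0 u (le_trans hs0 hu.1))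
    linarith
  have hxpos : ∀ u, T ≤ u → 0 < x u := fun u hu => (hT u hu).1
  have hEbase : ∀ᶠ t in atTop, T₁ ≤ t ∧ T₁ ≤ h t := by
    filter_upwards [eventually_ge_atTop T₁, hhtop.eventually_ge_atTop T₁] with t h1 h2
    exact ⟨h1, h2⟩
  have hratiopos : ∀ t, T₁ ≤ t → T₁ ≤ h t → 0 < ratio t := by
    intro t h1 h2
    exact div_pos (hxpos _ (le_trans hT₁T h2)) (hxpos _ (le_trans hT₁T h1))
  have hEone : ∀ᶠ t in atTop, 1 ≤ ratio t := by
    filter_upwards [hEbase] with t ⟨h1, h2⟩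
    rw [hratio]
    rw [le_div_iff₀ (hxpos _ (le_trans hT₁T h1)), one_mul]
    exact hanti (Set.mem_Ici.2 (le_trans hT₁T h2)) (Set.mem_Ici.2 (le_trans hT₁T h1))
      (hhle t (le_trans hT₁0 h1))
  -- continuity of g/x on [T₁,∞) intervals
  have hgxc : ∀ a b, T₁ ≤ a → ContinuousOn (fun s => g s / x s) (Set.Icc a b) := by
    intro a b ha
    intro u hu
    have hu1 : T₁ ≤ u := le_trans ha hu.1
    exact ContinuousWithinAt.div (hgc u hu1).continuousWithinAt
      ((hxc u (le_trans hTT₀ (le_trans hT₁T hu1))).continuousWithinAt)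
      (ne_of_gt (hxpos u (le_trans hT₁T hu1)))
  -- log FTC
  have hlog : ∀ t, T₁ ≤ t → T₁ ≤ h t → Real.log (ratio t) = ∫ s in h t..t, g s / x s := by
    intro t h1 h2
    have hht' : h t ≤ t := hhle t (le_trans hT₁0 h1)
    have hd : ∀ u ∈ Set.uIcc (h t) t, HasDerivAt (fun y => Real.log (x y)) (-g u / x u) u := by
      intro u hu
      rw [Set.uIcc_of_le hht'] at hu
      have huT : T ≤ u := le_trans hT₁T (le_trans h2 hu.1)
      exact (hsol u (le_trans hTT₀ huT)).log (ne_of_gt (hxpos u huT))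
    have hint : IntervalIntegrable (fun u => -g u / x u) MeasureTheory.volume (h t) t := by
      apply ContinuousOn.intervalIntegrable
      rw [Set.uIcc_of_le hht']
      have := (hgxc (h t) t h2).neg
      simp only [neg_div]; exact this
    have := intervalIntegral.integral_eq_sub_of_hasDerivAt hd hint
    have hx1 : (0:ℝ) < x (h t) := hxpos _ (le_trans hT₁T h2)
    have hx2 : (0:ℝ) < x t := hxpos _ (le_trans hT₁T h1)
    rw [hratio]
    rw [Real.log_div (ne_of_gt hx1) (ne_of_gt hx2)]
    have heq : ∫ u in h t..t, -g u / x u = -∫ u in h t..t, g u / x u := by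
      rw [← intervalIntegral.integral_neg]
      congr 1; ext u; rw [neg_div]
    rw [heq] at this
    linarith [this]
  -- the key iteration step
  have hkey : ∀ L : ℝ, 0 ≤ L → (∀ᶠ t in atTop, L ≤ ratio t) → ∀ ε : ℝ, 0 < ε →
      ∀ᶠ t in atTop, Real.exp (L * (α - ε)) ≤ ratio t := by
    intro L hL0 hLev ε hε
    obtain ⟨R_L, hR_L⟩ := eventually_atTop.1 (hLev.and hEbase)
    filter_upwards [hEbase, hhtop.eventually_ge_atTop R_L, hEh ε hε] with t ⟨h1, h2⟩ hR hInt
    have hht' : h t ≤ t := hhle t (le_trans hT₁0 h1)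
    have hpt : ∀ s ∈ Set.Icc (h t) t, P s * L ≤ g s / x s := by
      intro s hs
      have hsR : R_L ≤ s := le_trans hR hs.1
      obtain ⟨hLs, hs1, hs2⟩ := hR_L s hsR
      have hxs : 0 < x s := hxpos s (le_trans hT₁T hs1)
      have hPs : 0 ≤ P s := hP0 s (le_trans hT₁0 hs1)
      have c1 : P s * L ≤ P s * ratio s := mul_le_mul_of_nonneg_left hLs hPs
      have c2 : P s * ratio s ≤ g s / x s := by
        rw [hratio]
        rw [mul_div_assoc']
        exact (div_le_div_iff_of_pos_right hxs).2 (hgP s hs1)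
      linarith
    have hint1 : IntervalIntegrable (fun s => P s * L) MeasureTheory.volume (h t) t :=
      (hPc.mul continuous_const).intervalIntegrable _ _
    have hint2 : IntervalIntegrable (fun s => g s / x s) MeasureTheory.volume (h t) t := by
      apply ContinuousOn.intervalIntegrable
      rw [Set.uIcc_of_le hht']
      exact hgxc (h t) t h2
    have hmono := intervalIntegral.integral_mono_on hht' hint1 hint2 hpt
    rw [intervalIntegral.integral_mul_const] at hmono
    have hstep : L * (α - ε) ≤ Real.log (ratio t) := by
      rw [hlog t h1 h2]
      have : (α - ε) * L ≤ (∫ s in h t..t, P s) * L := mul_le_mul_of_nonneg_right hInt hL0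
      nlinarith
    calc Real.exp (L * (α - ε)) ≤ Real.exp (Real.log (ratio t)) := Real.exp_le_exp.2 hstep
      _ = ratio t := Real.exp_log (hratiopos t h1 h2)
  -- the frequent upper bound on the ratio (coboundedness)
  obtain ⟨R', hR'⟩ := eventually_atTop.1 hEbase
  set c : ℝ := α / 2 with hcdef
  set d : ℝ := α / 4 with hddef
  have hd0 : 0 < d := by rw [hddef]; linarith
  have hfreq : ∀ R : ℝ, ∃ u, R ≤ u ∧ ratio u ≤ 1 / (d * d) := by
    intro R
    have hev : ∀ᶠ t in atTop, (T₁ ≤ t ∧ T₁ ≤ h t) ∧ (max R R' ≤ h t) ∧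
        (α - c ≤ ∫ s in h t..t, P s) := by
      filter_upwards [hEbase, hhtop.eventually_ge_atTop (max R R'), hEh c (by rw [hcdef]; linarith)]
        with t h1 h2 h3
      exact ⟨h1, h2, h3⟩
    obtain ⟨t, ⟨h1, h2⟩, hmax, hInt⟩ := hev.exists
    have hht' : h t ≤ t := hhle t (le_trans hT₁0 h1)
    have hcint : c ≤ ∫ s in h t..t, P s := by rw [hcdef] at *; linarith
    -- base facts for points in [h t, t]
    have hbase' : ∀ s, h t ≤ s → T₁ ≤ s ∧ T₁ ≤ h s :=
      fun s hs => hR' s (le_trans (le_trans (le_max_right _ _) hmax) hs)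
    -- find t* by IVT
    set F : ℝ → ℝ := fun u => ∫ s in h t..u, P s with hFdef
    have hFc : Continuous F := intervalIntegral.continuous_primitive hPint (h t)
    have hFht : F (h t) = 0 := intervalIntegral.integral_same
    have hdmem : d ∈ Set.Icc (F (h t)) (F t) := by
      constructor
      · rw [hFht]; exact le_of_lt hd0
      · rw [hFdef]; rw [hcdef, hddef] at *; linarith
    obtain ⟨ts, hts, hFts⟩ := intermediate_value_Icc hht' hFc.continuousOn hdmem
    have hts1 : T₁ ≤ ts := (hbase' ts hts.1).1
    have htsh : T₁ ≤ h ts := (hbase' ts hts.1).2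
    have hts0 : (0:ℝ) ≤ ts := le_trans hT₁0 hts1
    -- split the integral
    have hsplit : F ts + ∫ s in ts..t, P s = F t :=
      intervalIntegral.integral_add_adjacent_intervals (hPint _ _) (hPint _ _)
    have htail : d ≤ ∫ s in ts..t, P s := by
      rw [hFts] at hsplit
      have : c ≤ F t := hcint
      rw [hcdef, hddef] at *; linarith
    -- (A) : d * x (h t) ≤ x ts
    have hA : d * x (h t) ≤ x ts := by
      have hftc1 := hftc ts t hts1 hts.2
      have hpt : ∀ s ∈ Set.Icc ts t, P s * x (h t) ≤ g s := by
        intro s hs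
        have hs1 : T₁ ≤ s := le_trans hts1 hs.1
        have hsh1 : T₁ ≤ h s := (hbase' s (le_trans hts.1 hs.1)).2
        have hxhs : x (h t) ≤ x (h s) := by
          apply hanti (Set.mem_Ici.2 (le_trans hT₁T hsh1)) (Set.mem_Ici.2 (le_trans hT₁T h2))
          exact hhmono s t (le_trans hT₁0 hs1) hs.2
        calc P s * x (h t) ≤ P s * x (h s) :=
              mul_le_mul_of_nonneg_left hxhs (hP0 s (le_trans hT₁0 hs1))
          _ ≤ g s := hgP s hs1
      have hint1 : IntervalIntegrable (fun s => P s * x (h t)) MeasureTheory.volume ts t :=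
        (hPc.mul continuous_const).intervalIntegrable _ _
      have hint2 : IntervalIntegrable g MeasureTheory.volume ts t := by
        apply ContinuousOn.intervalIntegrable
        rw [Set.uIcc_of_le hts.2]
        exact hgcOn ts t hts1
      have hmono := intervalIntegral.integral_mono_on hts.2 hint1 hint2 hpt
      rw [intervalIntegral.integral_mul_const] at hmono
      have hxt : 0 < x t := hxpos t (le_trans hT₁T h1)
      have h3 : d * x (h t) ≤ (∫ s in ts..t, P s) * x (h t) := by
        apply mul_le_mul_of_nonneg_right htail
        exact le_of_lt (hxpos _ (le_trans hT₁T h2))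
      nlinarith [hftc1]
    -- (B) : d * x (h ts) ≤ x (h t)
    have hB : d * x (h ts) ≤ x (h t) := by
      have hftc2 := hftc (h t) ts h2 hts.1
      have hpt : ∀ s ∈ Set.Icc (h t) ts, P s * x (h ts) ≤ g s := by
        intro s hs
        have hs1 : T₁ ≤ s := (hbase' s hs.1).1
        have hsh1 : T₁ ≤ h s := (hbase' s hs.1).2
        have hxhs : x (h ts) ≤ x (h s) := by
          apply hanti (Set.mem_Ici.2 (le_trans hT₁T hsh1)) (Set.mem_Ici.2 (le_trans hT₁T htsh))
          exact hhmono s ts (le_trans hT₁0 hs1) hs.2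
        calc P s * x (h ts) ≤ P s * x (h s) :=
              mul_le_mul_of_nonneg_left hxhs (hP0 s (le_trans hT₁0 hs1))
          _ ≤ g s := hgP s hs1
      have hint1 : IntervalIntegrable (fun s => P s * x (h ts)) MeasureTheory.volume (h t) ts :=
        (hPc.mul continuous_const).intervalIntegrable _ _
      have hint2 : IntervalIntegrable g MeasureTheory.volume (h t) ts := by
        apply ContinuousOn.intervalIntegrable
        rw [Set.uIcc_of_le hts.1]
        exact hgcOn (h t) ts h2
      have hmono := intervalIntegral.integral_mono_on hts.1 hint1 hint2 hpt
      rw [intervalIntegral.integral_mul_const] at hmono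
      have hxts : 0 < x ts := hxpos ts (le_trans hT₁T hts1)
      have h3 : d * x (h ts) ≤ (∫ s in h t..ts, P s) * x (h ts) := by
        apply mul_le_mul_of_nonneg_right _ (le_of_lt (hxpos _ (le_trans hT₁T htsh)))
        exact hFts.ge
      nlinarith [hftc2]
    refine ⟨ts, le_trans (le_trans (le_max_left R R') hmax) hts.1, ?_⟩
    have hxts : 0 < x ts := hxpos ts (le_trans hT₁T hts1)
    rw [hratio, div_le_iff₀ hxts]
    have : d * (d * x (h ts)) ≤ x ts := le_trans (mul_le_mul_of_nonneg_left hB (le_of_lt hd0)) hA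
    rw [div_mul_eq_mul_div, le_div_iff₀ (by positivity : (0:ℝ) < d * d)]
    calc x (h ts) * (d * d) = d * (d * x (h ts)) := by ring
      _ ≤ x ts := this
      _ = 1 * x ts := (one_mul _).symm
  -- coboundedness
  have hcb : IsCoboundedUnder (· ≥ ·) atTop ratio := by
    refine ⟨1 / (d * d), ?_⟩
    intro a ha
    simp only [eventually_map] at ha
    obtain ⟨R₂, hR₂⟩ := eventually_atTop.1 ha
    obtain ⟨u, hu1, hu2⟩ := hfreq R₂
    exact le_trans (hR₂ u hu1) hu2
  -- the liminf
  set w := liminf ratio atTop with hwdef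
  have le_w : ∀ b : ℝ, (∀ᶠ t in atTop, b ≤ ratio t) → b ≤ w := by
    intro b hb
    exact Filter.le_liminf_of_le hcb hb
  have hbddratio : IsBoundedUnder (· ≥ ·) atTop ratio := by
    refine ⟨1, ?_⟩
    simpa only [eventually_map] using hEone
  have lt_w : ∀ b : ℝ, b < w → ∀ᶠ t in atTop, b < ratio t := by
    intro b hb
    exact Filter.eventually_lt_of_lt_liminf hb hbddratio
  -- properties of lamSeq
  have c1 : ∀ n, 1 ≤ lamSeq α n := by
    intro n
    induction n with
    | zero => exact le_refl 1
    | succ n ih =>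
      show (1:ℝ) ≤ Real.exp (α * lamSeq α n)
      have := Real.add_one_le_exp (α * lamSeq α n)
      nlinarith
  have c2 : ∀ n, lamSeq α n ≤ lam₀ := by
    have hlam1 : 1 ≤ lam₀ := by
      have := Real.add_one_le_exp (α * lam₀)
      rw [← hlam.1.2] at this
      nlinarith [hlam.1.1]
    intro n
    induction n with
    | zero => exact hlam1
    | succ n ih =>
      show Real.exp (α * lamSeq α n) ≤ lam₀
      calc Real.exp (α * lamSeq α n) ≤ Real.exp (α * lam₀) :=
            Real.exp_le_exp.2 (mul_le_mul_of_nonneg_left ih hα0.le)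
        _ = lam₀ := hlam.1.2.symm
  have c3 : ∀ n, lamSeq α n ≤ w := by
    intro n
    induction n with
    | zero => exact le_w 1 hEone
    | succ n ih =>
      show Real.exp (α * lamSeq α n) ≤ w
      have hS : ∀ ε : ℝ, 0 < ε → ε < 1 → Real.exp ((lamSeq α n - ε) * (α - ε)) ≤ w := by
        intro ε hε0 hε1
        have h1 : lamSeq α n - ε < w := lt_of_lt_of_le (by linarith) ih
        have hev1 : ∀ᶠ t in atTop, lamSeq α n - ε ≤ ratio t :=
          (lt_w _ h1).mono fun t ht => ht.le
        have h2 := hkey (lamSeq α n - ε) (by linarith [c1 n]) hev1 ε hε0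
        exact le_w _ h2
      have hlim : Tendsto (fun ε : ℝ => Real.exp ((lamSeq α n - ε) * (α - ε)))
          (nhdsWithin 0 (Set.Ioi 0)) (nhds (Real.exp (α * lamSeq α n))) := by
        have hc : Continuous (fun ε : ℝ => Real.exp ((lamSeq α n - ε) * (α - ε))) :=
          ((continuous_const.sub continuous_id).mul (continuous_const.sub continuous_id)).rexp
        have h0 := hc.tendsto 0
        simp only [sub_zero] at h0
        rw [mul_comm] at h0
        exact h0.mono_left nhdsWithin_le_nhds
      have hev : ∀ᶠ ε in nhdsWithin (0:ℝ) (Set.Ioi 0),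
          Real.exp ((lamSeq α n - ε) * (α - ε)) ≤ w := by
        filter_upwards [Ioo_mem_nhdsGT_of_mem (Set.left_mem_Ico.2 one_pos)] with ε hε
        exact hS ε hε.1 hε.2
      exact le_of_tendsto hlim hev
  -- the limit of lamSeq
  have hbddA : BddAbove (Set.range (lamSeq α)) := by
    refine ⟨lam₀, ?_⟩
    rintro y ⟨n, rfl⟩
    exact c2 n
  have hmonostep : ∀ n, lamSeq α n ≤ lamSeq α (n + 1) := by
    intro n
    induction n with
    | zero =>
      show (1:ℝ) ≤ Real.exp (α * lamSeq α 0)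
      have := Real.add_one_le_exp (α * lamSeq α 0)
      nlinarith [c1 0]
    | succ n ih =>
      show Real.exp (α * lamSeq α n) ≤ Real.exp (α * lamSeq α (n+1))
      exact Real.exp_le_exp.2 (mul_le_mul_of_nonneg_left ih hα0.le)
  have hmonoL : Monotone (lamSeq α) := monotone_nat_of_le_succ hmonostep
  set L : ℝ := ⨆ n, lamSeq α n with hLdef
  have hLtend : Tendsto (lamSeq α) atTop (nhds L) := tendsto_atTop_ciSup hmonoL hbddA
  have hshift : Tendsto (fun n => lamSeq α (n + 1)) atTop (nhds L) :=
    hLtend.comp (tendsto_add_atTop_nat 1)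
  have hexp : Tendsto (fun n => Real.exp (α * lamSeq α n)) atTop (nhds (Real.exp (α * L))) :=
    (Real.continuous_exp.tendsto (α * L)).comp (hLtend.const_mul α)
  have hfix : L = Real.exp (α * L) := by
    apply tendsto_nhds_unique hshift
    exact hexp
  have hL1 : 1 ≤ L := by
    have := le_ciSup hbddA 0
    exact this
  have hLw : L ≤ w := ciSup_le c3
  have hlamL : lam₀ ≤ L := hlam.2 ⟨by linarith, hfix⟩
  linarith
end

section
/- Suppose x is a positive solution of x'(t) + Σ_i p_i(t) x(τ_i(t)) = 0 on [t₁,∞), with x nonincreasing, and suppose x(t)·a_r(t,s) ≤ x(s) for t ≥ s ≥ t₁. Then integrating the equation from t* to t (for t₁ ≤ h(t) ≤ t* ≤ t) yields ∫_{t*}^t Σ_i p_i(ζ) a_r(h(t), τ_i(ζ)) dζ ≤ x(t*)/x(h(t)). -/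
open Real Filter intervalIntegral

/-- If `x` is a positive nonincreasing solution of the delay
equation on `[t₁,∞)` and `x(t)·a_r(t,s) ≤ x(s)` for `t ≥ s ≥ t₁`, then for
`t₁ ≤ h(t) ≤ t* ≤ t` (with `τᵢ(ζ) ∈ [t₁, h(t)]` for `ζ ∈ [t*, t]`),
integrating the equation from `t*` to `t` yields
`∫_{t*}^t ∑ pᵢ(ζ) a_r(h(t), τᵢ(ζ)) dζ ≤ x(t*)/x(h(t))`. -/
theorem stmt11 (m : ℕ) (hm : 1 ≤ m) (p τ : Fin m → ℝ → ℝ)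
    (hp : ∀ i t, 0 ≤ t → 0 ≤ p i t) (hpc : ∀ i, Continuous (p i))
    (hτ : ∀ i t, 0 ≤ t → τ i t < t) (hτc : ∀ i, Continuous (τ i))
    (x : ℝ → ℝ) (t₁ : ℝ) (ht₁ : 0 ≤ t₁)
    (hxpos : ∀ t, t₁ ≤ t → 0 < x t)
    (hxanti : AntitoneOn x (Set.Ici t₁))
    (hsol : ∀ t, t₁ ≤ t → HasDerivAt x (-(∑ i, p i t * x (τ i t))) t)
    (a : ℝ → ℝ → ℝ)
    (ha : ∀ t s, t₁ ≤ s → s ≤ t → x t * a t s ≤ x s)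
    (h : ℝ → ℝ) (t tstar : ℝ)
    (h1 : t₁ ≤ h t) (h2 : h t ≤ tstar) (h3 : tstar ≤ t)
    (hτh : ∀ i ζ, tstar ≤ ζ → ζ ≤ t → t₁ ≤ τ i ζ ∧ τ i ζ ≤ h t) :
    ∫ ζ in tstar..t, ∑ i, p i ζ * a (h t) (τ i ζ) ≤ x tstar / x (h t) := by

  have hc : 0 < x (h t) := hxpos _ h1
  have huIcc : Set.uIcc tstar t = Set.Icc tstar t := Set.uIcc_of_le h3
  -- continuity of the right-hand integrand
  have hg_cont : ContinuousOn (fun ζ => ∑ i, p i ζ * x (τ i ζ)) (Set.uIcc tstar t) := by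
    rw [huIcc]
    intro ζ hζ
    apply ContinuousAt.continuousWithinAt
    apply tendsto_finset_sum
    intro i _
    have hτi := hτh i ζ hζ.1 hζ.2
    exact (((hpc i).continuousAt).mul
      (((hsol _ hτi.1).continuousAt).comp (hτc i).continuousAt) : ContinuousAt _ ζ)
  have hg_int : IntervalIntegrable (fun ζ => ∑ i, p i ζ * x (τ i ζ)) MeasureTheory.volume tstar t :=
    hg_cont.intervalIntegrable
  -- FTC
  have hftc : (∫ ζ in tstar..t, -(∑ i, p i ζ * x (τ i ζ))) = x t - x tstar := by
    apply intervalIntegral.integral_eq_sub_of_hasDerivAt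
    · intro s hs
      rw [huIcc] at hs
      exact hsol s (le_trans (le_trans h1 h2) hs.1)
    · exact hg_int.neg
  have hkey : (∫ ζ in tstar..t, ∑ i, p i ζ * x (τ i ζ)) = x tstar - x t := by
    have := hftc
    rw [intervalIntegral.integral_neg] at this
    linarith
  -- pointwise bound
  have hpt : ∀ ζ ∈ Set.Icc tstar t,
      (∑ i, p i ζ * a (h t) (τ i ζ)) ≤ (∑ i, p i ζ * x (τ i ζ)) / x (h t) := by
    intro ζ hζ
    rw [Finset.sum_div]
    apply Finset.sum_le_sum
    intro i _
    have hτi := hτh i ζ hζ.1 hζ.2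
    have hpnn : 0 ≤ p i ζ := hp i ζ (le_trans ht₁ (le_trans (le_trans h1 h2) hζ.1))
    have haux : x (h t) * a (h t) (τ i ζ) ≤ x (τ i ζ) := ha (h t) (τ i ζ) hτi.1 hτi.2
    have : a (h t) (τ i ζ) ≤ x (τ i ζ) / x (h t) := by
      rw [le_div_iff₀ hc]; linarith [haux]
    calc p i ζ * a (h t) (τ i ζ) ≤ p i ζ * (x (τ i ζ) / x (h t)) :=
          mul_le_mul_of_nonneg_left this hpnn
      _ = p i ζ * x (τ i ζ) / x (h t) := by ring
  by_cases hint : IntervalIntegrable (fun ζ => ∑ i, p i ζ * a (h t) (τ i ζ))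
      MeasureTheory.volume tstar t
  · have hmono : (∫ ζ in tstar..t, ∑ i, p i ζ * a (h t) (τ i ζ)) ≤
        ∫ ζ in tstar..t, (∑ i, p i ζ * x (τ i ζ)) / x (h t) := by
      apply intervalIntegral.integral_mono_on h3 hint (hg_int.div_const _)
      exact hpt
    have hdiv : (∫ ζ in tstar..t, (∑ i, p i ζ * x (τ i ζ)) / x (h t)) =
        (x tstar - x t) / x (h t) := by
      rw [intervalIntegral.integral_div, hkey]
    have hxt : 0 < x t := hxpos t (le_trans (le_trans h1 h2) h3)
    calc (∫ ζ in tstar..t, ∑ i, p i ζ * a (h t) (τ i ζ)) ≤ (x tstar - x t) / x (h t) := by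
          rw [← hdiv]; exact hmono
      _ ≤ x tstar / x (h t) := by
          gcongr
          linarith
  · rw [intervalIntegral.integral_undef hint]
    exact le_of_lt (div_pos (hxpos _ (le_trans h1 h2)) hc)
end

section
/- Suppose x is a positive nonincreasing solution of x'(t) + Σ_i p_i(t) x(τ_i(t)) = 0 and x(h(ζ))/x(ζ) > μ for all ζ ∈ [h(t), t*], where μ > 1 and x(τ_i(ζ)) ≥ x(h(ζ)) a_r(h(ζ), τ_i(ζ)). Then ∫_{h(t)}^{t*} Σ_i p_i(ζ) a_r(h(ζ), τ_i(ζ)) dζ ≤ (1/μ) ln( x(h(t))/x(t*) ). -/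
open Real Filter intervalIntegral

/-- If `x` is a positive nonincreasing solution of the delay
equation with `x(h(ζ))/x(ζ) > μ` on `[h(t), t*]` for some `μ > 1`, and
`x(τᵢ(ζ)) ≥ x(h(ζ)) a_r(h(ζ), τᵢ(ζ))` there, then
`∫_{h(t)}^{t*} ∑ pᵢ(ζ) a_r(h(ζ), τᵢ(ζ)) dζ ≤ (1/μ) ln (x(h(t))/x(t*))`. -/
theorem stmt12 (m : ℕ) (hm : 1 ≤ m) (p τ : Fin m → ℝ → ℝ)
    (hp : ∀ i t, 0 ≤ t → 0 ≤ p i t) (hpc : ∀ i, Continuous (p i))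
    (hτ : ∀ i t, 0 ≤ t → τ i t < t) (hτc : ∀ i, Continuous (τ i))
    (x : ℝ → ℝ) (t₁ : ℝ) (ht₁ : 0 ≤ t₁)
    (hxpos : ∀ t, t₁ ≤ t → 0 < x t)
    (hxanti : AntitoneOn x (Set.Ici t₁))
    (hsol : ∀ t, t₁ ≤ t → HasDerivAt x (-(∑ i, p i t * x (τ i t))) t)
    (a : ℝ → ℝ → ℝ) (h : ℝ → ℝ) (t tstar : ℝ) (μ : ℝ) (hμ : 1 < μ)
    (h1 : t₁ ≤ h t) (h2 : h t ≤ tstar) (h3 : tstar ≤ t)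
    (hratio : ∀ ζ, h t ≤ ζ → ζ ≤ tstar → μ < x (h ζ) / x ζ)
    (hlow : ∀ i ζ, h t ≤ ζ → ζ ≤ tstar →
      x (h ζ) * a (h ζ) (τ i ζ) ≤ x (τ i ζ)) :
    ∫ ζ in h t..tstar, ∑ i, p i ζ * a (h ζ) (τ i ζ) ≤
      (1 / μ) * Real.log (x (h t) / x tstar) := by
  have hμ0 : (0:ℝ) < μ := lt_trans one_pos hμ
  have hxts : 0 < x tstar := hxpos _ (h1.trans h2)
  have hxht : 0 < x (h t) := hxpos _ h1
  have hlog0 : 0 ≤ Real.log (x (h t) / x tstar) := by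
    apply Real.log_nonneg
    rw [le_div_iff₀ hxts]
    have := hxanti (Set.mem_Ici.mpr h1) (Set.mem_Ici.mpr (h1.trans h2)) h2
    linarith
  by_cases hint : IntervalIntegrable (fun ζ => ∑ i, p i ζ * a (h ζ) (τ i ζ))
      MeasureTheory.volume (h t) tstar
  · have key := intervalIntegral.integral_le_sub_of_hasDeriv_right_of_le
      (g := fun ζ => -(1/μ) * Real.log (x ζ))
      (g' := fun ζ => (1/μ) * ((∑ i, p i ζ * x (τ i ζ)) / x ζ))
      (φ := fun ζ => ∑ i, p i ζ * a (h ζ) (τ i ζ)) h2 ?_ ?_ ?_ ?_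
    · calc (∫ ζ in h t..tstar, ∑ i, p i ζ * a (h ζ) (τ i ζ))
          ≤ -(1/μ) * Real.log (x tstar) - -(1/μ) * Real.log (x (h t)) := key
        _ = (1 / μ) * Real.log (x (h t) / x tstar) := by
            rw [Real.log_div hxht.ne' hxts.ne']; ring
    · intro ζ hζ
      have ht₁ζ : t₁ ≤ ζ := h1.trans hζ.1
      exact (continuousAt_const.mul
        ((hsol ζ ht₁ζ).continuousAt.log (hxpos ζ ht₁ζ).ne')).continuousWithinAt
    · intro ζ hζ
      have ht₁ζ : t₁ ≤ ζ := h1.trans hζ.1.le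
      have hd : HasDerivAt (fun ζ => -(1/μ) * Real.log (x ζ))
          ((1/μ) * ((∑ i, p i ζ * x (τ i ζ)) / x ζ)) ζ := by
        have := ((hsol ζ ht₁ζ).log (hxpos ζ ht₁ζ).ne').const_mul (-(1/μ))
        refine this.congr_deriv ?_
        ring
      exact hd.hasDerivWithinAt
    · exact (intervalIntegrable_iff_integrableOn_Icc_of_le h2).mp hint
    · intro ζ hζ
      have ht₁ζ : t₁ ≤ ζ := h1.trans hζ.1.le
      have hxζ : 0 < x ζ := hxpos ζ ht₁ζ
      have hζ0 : 0 ≤ ζ := ht₁.trans ht₁ζ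
      set S : ℝ := ∑ i, p i ζ * a (h ζ) (τ i ζ) with hS
      set D : ℝ := ∑ i, p i ζ * x (τ i ζ) with hD
      -- D ≥ 0 since x is antitone and its derivative at ζ is -D
      have hD0 : 0 ≤ D := by
        have hd : HasDerivAt x (-D) ζ := hsol ζ ht₁ζ
        have hslope : Tendsto (slope x ζ) (nhdsWithin ζ (Set.Ioi ζ)) (nhds (-D)) := by
          have h' := hd.hasDerivWithinAt (s := Set.Ioi ζ)
          rw [hasDerivWithinAt_iff_tendsto_slope] at h'
          rwa [Set.diff_singleton_eq_self (by simp : ζ ∉ Set.Ioi ζ)] at h'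
        have hle : -D ≤ 0 := by
          refine le_of_tendsto hslope ?_
          filter_upwards [self_mem_nhdsWithin] with s hs1
          rw [slope_def_field]
          apply div_nonpos_of_nonpos_of_nonneg
          · have := hxanti (Set.mem_Ici.mpr ht₁ζ)
              (Set.mem_Ici.mpr (ht₁ζ.trans (le_of_lt hs1))) (le_of_lt hs1)
            linarith
          · linarith [(Set.mem_Ioi.mp hs1).le]
        linarith
      -- x(hζ) * S ≤ D
      have hDS : x (h ζ) * S ≤ D := by
        rw [hS, hD, Finset.mul_sum]
        apply Finset.sum_le_sum
        intro i _
        have hl := hlow i ζ hζ.1.le hζ.2.le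
        calc x (h ζ) * (p i ζ * a (h ζ) (τ i ζ))
            = p i ζ * (x (h ζ) * a (h ζ) (τ i ζ)) := by ring
          _ ≤ p i ζ * x (τ i ζ) := mul_le_mul_of_nonneg_left hl (hp i ζ hζ0)
      -- μ x(ζ) ≤ x(hζ)
      have hμx : μ * x ζ ≤ x (h ζ) := by
        have := hratio ζ hζ.1.le hζ.2.le
        rw [lt_div_iff₀ hxζ] at this
        linarith
      have key : S * (μ * x ζ) ≤ D := by
        rcases le_or_gt S 0 with hSle | hSpos
        · exact (mul_nonpos_of_nonpos_of_nonneg hSle (by positivity)).trans hD0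
        · calc S * (μ * x ζ) ≤ S * x (h ζ) :=
              mul_le_mul_of_nonneg_left hμx hSpos.le
            _ = x (h ζ) * S := mul_comm _ _
            _ ≤ D := hDS
      have : S ≤ D / (μ * x ζ) := (le_div_iff₀ (by positivity)).mpr key
      calc S ≤ D / (μ * x ζ) := this
        _ = (1/μ) * (D / x ζ) := by ring
  · rw [intervalIntegral.integral_undef hint]
    positivity
end

section
/- Assume p_i ≥ 0 continuous, τ_i(t) < t, τ_i(t) → ∞, let h(t) = max_i sup_{0≤s≤t} τ_i(s), a_r the iterated exponential functionals, and assume 0 < α := liminf_{t→∞} ∫_{h(t)}^t Σ_i p_i(s) ds ≤ 1/e with λ₀ the smaller root of λ = e^{αλ}. If for some r ∈ ℕ, limsup_{t→∞} ∫_{h(t)}^t Σ_i p_i(ζ) a_r(h(ζ), τ_i(ζ)) dζ > (1 + ln λ₀)/λ₀, then every solution of x'(t) + Σ_i p_i(t) x(τ_i(t)) = 0 oscillates. -/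
open Real Filter intervalIntegral MeasureTheory Set


lemma primitive_cont {q : ℝ → ℝ} (hq : Continuous q) :
    Continuous fun y : ℝ => ∫ x in (0:ℝ)..y, q x := by
  refine continuous_iff_continuousAt.2 fun y => ?_
  exact (intervalIntegral.integral_hasStrictDerivAt_right (hq.intervalIntegrable _ _)
    (hq.stronglyMeasurableAtFilter _ _) hq.continuousAt).hasDerivAt.continuousAt

lemma integral_split {q : ℝ → ℝ} (hq : Continuous q) (s t : ℝ) :
    ∫ x in s..t, q x = (∫ x in (0:ℝ)..t, q x) - (∫ x in (0:ℝ)..s, q x) := by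
  rw [eq_sub_iff_add_eq, add_comm]
  exact intervalIntegral.integral_add_adjacent_intervals
    (hq.intervalIntegrable _ _) (hq.intervalIntegrable _ _)

lemma cont2_integral {q : ℝ → ℝ} (hq : Continuous q) :
    Continuous fun pr : ℝ × ℝ => ∫ x in pr.2..pr.1, q x := by
  have : (fun pr : ℝ × ℝ => ∫ x in pr.2..pr.1, q x)
      = fun pr : ℝ × ℝ => (∫ x in (0:ℝ)..pr.1, q x) - (∫ x in (0:ℝ)..pr.2, q x) := by
    funext pr; exact integral_split hq _ _
  rw [this]
  exact ((primitive_cont hq).comp continuous_fst).sub ((primitive_cont hq).comp continuous_snd)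

lemma log_est {x d g : ℝ → ℝ} {u v : ℝ} (huv : u ≤ v)
    (hx : ∀ s ∈ Icc u v, HasDerivAt x (d s) s)
    (hpos : ∀ s ∈ Icc u v, 0 < x s)
    (hdc : ContinuousOn d (Icc u v))
    (hgc : ContinuousOn g (Icc u v))
    (hle : ∀ s ∈ Icc u v, d s ≤ -(g s * x s)) :
    Real.exp (∫ s in u..v, g s) * x v ≤ x u := by
  have hxc : ContinuousOn x (Icc u v) := fun s hs => (hx s hs).continuousAt.continuousWithinAt
  have hq : ContinuousOn (fun s => d s / x s) (Icc u v) :=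
    hdc.div hxc fun s hs => (hpos s hs).ne'
  have huIcc : uIcc u v = Icc u v := uIcc_of_le huv
  have hlog : ∫ s in u..v, d s / x s = Real.log (x v) - Real.log (x u) := by
    apply intervalIntegral.integral_eq_sub_of_hasDerivAt
    · intro s hs
      rw [huIcc] at hs
      exact (hx s hs).log (hpos s hs).ne'
    · exact (hq.mono huIcc.le).intervalIntegrable
  have hmono : ∫ s in u..v, g s ≤ ∫ s in u..v, -(d s / x s) := by
    apply intervalIntegral.integral_mono_on huv
    · exact (hgc.mono huIcc.le).intervalIntegrable
    · exact ((hq.neg).mono huIcc.le).intervalIntegrable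
    · intro s hs
      have h1 := hle s hs
      have h2 := hpos s hs
      rw [le_neg, div_le_iff₀ h2]
      nlinarith
  rw [intervalIntegral.integral_neg, hlog] at hmono
  have : Real.exp (∫ s in u..v, g s) ≤ Real.exp (Real.log (x u) - Real.log (x v)) :=
    Real.exp_le_exp.2 (by linarith)
  rw [Real.exp_sub, Real.exp_log (hpos u ⟨le_refl u, huv⟩), Real.exp_log (hpos v ⟨huv, le_refl v⟩)] at this
  rw [← le_div_iff₀ (hpos v ⟨huv, le_refl v⟩)]
  exact this

def Mset {m : ℕ} (τ : Fin m → ℝ → ℝ) (t : ℝ) : Set ℝ :=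
  {y : ℝ | ∃ i : Fin m, ∃ s, 0 ≤ s ∧ s ≤ t ∧ y = τ i s}

variable {m : ℕ} {τ : Fin m → ℝ → ℝ} {h : ℝ → ℝ}

lemma Mset_bdd (hτ : ∀ i t, 0 ≤ t → τ i t < t) (t : ℝ) : BddAbove (Mset τ t) := by
  refine ⟨t, ?_⟩
  rintro y ⟨i, s, hs0, hst, rfl⟩
  exact (hτ i s hs0).le.trans hst

lemma Mset_ne (i₀ : Fin m) {t : ℝ} (ht : 0 ≤ t) : (Mset τ t).Nonempty :=
  ⟨τ i₀ 0, i₀, 0, le_rfl, ht, rfl⟩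

lemma h_ge (hh : ∀ t, h t = sSup (Mset τ t)) (hτ : ∀ i t, 0 ≤ t → τ i t < t)
    (i : Fin m) {t : ℝ} (ht : 0 ≤ t) : τ i t ≤ h t := by
  rw [hh]; exact le_csSup (Mset_bdd hτ t) ⟨i, t, ht, le_rfl, rfl⟩

lemma h_le (hh : ∀ t, h t = sSup (Mset τ t)) (hτ : ∀ i t, 0 ≤ t → τ i t < t)
    (i₀ : Fin m) {t : ℝ} (ht : 0 ≤ t) : h t ≤ t := by
  rw [hh]
  apply csSup_le (Mset_ne i₀ ht)
  rintro y ⟨i, s, hs0, hst, rfl⟩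
  exact (hτ i s hs0).le.trans hst

lemma h_mono (hh : ∀ t, h t = sSup (Mset τ t)) (hτ : ∀ i t, 0 ≤ t → τ i t < t)
    (i₀ : Fin m) {t t' : ℝ} (ht : 0 ≤ t) (htt' : t ≤ t') : h t ≤ h t' := by
  rw [hh, hh]
  apply csSup_le_csSup (Mset_bdd hτ t') (Mset_ne i₀ ht)
  rintro y ⟨i, s, h1, h2, h3⟩
  exact ⟨i, s, h1, h2.trans htt', h3⟩

lemma h_tendsto (hh : ∀ t, h t = sSup (Mset τ t)) (hτ : ∀ i t, 0 ≤ t → τ i t < t)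
    (hτtop : ∀ i, Tendsto (τ i) atTop atTop) (i₀ : Fin m) :
    Tendsto h atTop atTop := by
  apply tendsto_atTop_mono' atTop _ (hτtop i₀)
  filter_upwards [eventually_ge_atTop (0:ℝ)] with t ht
  exact h_ge hh hτ i₀ ht

lemma h_contOn (hm : 1 ≤ m) (hh : ∀ t, h t = sSup (Mset τ t)) (hτ : ∀ i t, 0 ≤ t → τ i t < t)
    (hτc : ∀ i, Continuous (τ i)) : ContinuousOn h (Ici 0) := by
  have i₀ : Fin m := ⟨0, hm⟩
  intro t₀ ht₀
  rw [Metric.continuousWithinAt_iff]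
  intro ε hε
  have huc : ∀ i : Fin m, ∃ δ > 0, ∀ a ∈ Icc (t₀-1) (t₀+1), ∀ b ∈ Icc (t₀-1) (t₀+1),
      dist a b < δ → dist (τ i a) (τ i b) < ε/2 := fun i =>
    Metric.uniformContinuousOn_iff.1
      ((isCompact_Icc).uniformContinuousOn_of_continuous (hτc i).continuousOn) (ε/2) (by linarith)
  choose δf hδ0 hδf using huc
  have hne : (Finset.univ : Finset (Fin m)).Nonempty := ⟨i₀, Finset.mem_univ _⟩
  set δ₁ := Finset.univ.inf' hne δf with hδ₁def
  have hδ₁ : 0 < δ₁ := (Finset.lt_inf'_iff hne).2 fun i _ => hδ0 i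
  refine ⟨min δ₁ 1, lt_min hδ₁ one_pos, fun t ht hdist => ?_⟩
  have key : ∀ s s' : ℝ, 0 ≤ s → s ≤ s' → s' - s < min δ₁ 1 → s ∈ Icc (t₀-1) (t₀+1) →
      s' ∈ Icc (t₀-1) (t₀+1) → h s' ≤ h s + ε/2 := by
    intro s s' hs0 hss' hd hsmem hs'mem
    rw [hh s']
    apply csSup_le (Mset_ne i₀ (hs0.trans hss'))
    rintro y ⟨i, w, hw0, hws', rfl⟩
    rcases le_or_gt w s with hws | hws
    · have h1 : τ i w ≤ h s := by
        rw [hh s]; exact le_csSup (Mset_bdd hτ s) ⟨i, w, hw0, hws, rfl⟩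
      linarith
    · have hwmem : w ∈ Icc (t₀-1) (t₀+1) := ⟨le_trans hsmem.1 hws.le, le_trans hws' hs'mem.2⟩
      have hd2 : dist w s < δf i := by
        rw [Real.dist_eq, abs_of_nonneg (by linarith)]
        exact lt_of_lt_of_le (by linarith) (le_trans (min_le_left _ _)
          (Finset.inf'_le _ (Finset.mem_univ i)))
      have h2 : dist (τ i w) (τ i s) < ε/2 := hδf i w hwmem s hsmem hd2
      rw [Real.dist_eq] at h2
      have h3 : τ i s ≤ h s := h_ge hh hτ i hs0
      have h4 := abs_lt.1 h2
      linarith [h4.1, h4.2]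
  have htmem : t ∈ Icc (t₀-1) (t₀+1) := by
    rw [Real.dist_eq] at hdist
    have := abs_lt.1 (lt_of_lt_of_le hdist (min_le_right _ _))
    constructor <;> linarith
  have ht₀mem : t₀ ∈ Icc (t₀-1) (t₀+1) := by constructor <;> linarith
  rw [Real.dist_eq] at hdist ⊢
  have habs := abs_lt.1 (lt_of_lt_of_le hdist le_rfl)
  rcases le_total t t₀ with hc | hc
  · have h1 : h t ≤ h t₀ := h_mono hh hτ i₀ ht hc
    have h2 : h t₀ ≤ h t + ε/2 := key t t₀ ht hc (by linarith [habs.1, habs.2]) htmem ht₀mem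
    rw [abs_sub_lt_iff]; constructor <;> linarith
  · have h1 : h t₀ ≤ h t := h_mono hh hτ i₀ ht₀ hc
    have h2 : h t ≤ h t₀ + ε/2 := key t₀ t ht₀ hc (by linarith [habs.1, habs.2]) ht₀mem htmem
    rw [abs_sub_lt_iff]; constructor <;> linarith

lemma liminf_extract {u : ℝ → ℝ} {α : ℝ} (hα : α = Filter.liminf u Filter.atTop) (hα0 : 0 < α)
    {ε : ℝ} (hε : 0 < ε) : ∀ᶠ t in atTop, α - ε < u t := by
  rw [Filter.liminf_eq] at hα
  set S := {a | ∀ᶠ t in atTop, a ≤ u t} with hS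
  have hSne : S.Nonempty := by
    by_contra hne
    rw [Set.not_nonempty_iff_eq_empty] at hne
    rw [hne, Real.sSup_empty] at hα; linarith
  by_cases hbdd : BddAbove S
  · obtain ⟨b, hbS, hb⟩ := exists_lt_of_lt_csSup hSne (show α - ε < sSup S by rw [← hα]; linarith)
    filter_upwards [hbS] with t ht
    linarith
  · rw [Real.sSup_of_not_bddAbove hbdd] at hα; linarith

lemma limsup_le_of_eventually {u : ℝ → ℝ} {c : ℝ}
    (h0 : ∀ᶠ t in atTop, 0 ≤ u t) (hc : ∀ᶠ t in atTop, u t ≤ c) :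
    Filter.limsup u Filter.atTop ≤ c := by
  rw [Filter.limsup_eq]
  refine csInf_le ⟨0, fun b hb => ?_⟩ hc
  obtain ⟨t, h1, h2⟩ := (h0.and hb).exists
  linarith

lemma root_lt {α lam₀ : ℝ} (hα0 : 0 < α)
    (hlam : IsLeast {lam : ℝ | 0 < lam ∧ lam = Real.exp (α * lam)} lam₀)
    {s : ℝ} (h1 : 1 ≤ s) (h2 : s < lam₀) : s < Real.exp (α * s) := by
  by_contra hcon
  push_neg at hcon
  set f := fun y : ℝ => Real.exp (α * y) - y with hf
  have hcont : ContinuousOn f (Icc 1 s) :=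
    ((Real.continuous_exp.comp (continuous_const.mul continuous_id)).sub continuous_id).continuousOn
  have hexpα : 1 < Real.exp (α * 1) := Real.one_lt_exp_iff.2 (by linarith)
  have h1' : 0 < f 1 := by simp only [hf]; linarith
  have h2' : f s ≤ 0 := by simp only [hf]; linarith
  obtain ⟨z, hz, hfz⟩ := intermediate_value_Icc' h1 hcont ⟨h2', h1'.le⟩
  have hzfix : z = Real.exp (α * z) := by
    simp only [hf] at hfz; linarith
  have : lam₀ ≤ z := hlam.2 ⟨by linarith [hz.1], hzfix⟩
  linarith [hz.2]

lemma karith {α ε δ lam' μ : ℝ} (hα : 0 < α) (hμ1 : 1 ≤ μ) (hμl : μ ≤ lam')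
    (hδ : 0 < δ) (hδle : μ + δ ≤ Real.exp (α * μ))
    (hε : 0 < ε) (hεle : ε ≤ δ / (2 * Real.exp (α * lam') * lam')) :
    μ + δ/2 ≤ Real.exp ((α - ε) * μ) := by
  have hl1 : 1 ≤ lam' := le_trans hμ1 hμl
  have he1 : Real.exp ((α - ε) * μ) = Real.exp (α * μ) * Real.exp (-(ε*μ)) := by
    rw [← Real.exp_add]; ring_nf
  have h2 : 1 - ε*μ ≤ Real.exp (-(ε*μ)) := by linarith [Real.add_one_le_exp (-(ε*μ))]
  have hA := Real.exp_pos (α*μ)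
  have hA' := Real.exp_pos (α*lam')
  have h4 : Real.exp (α*μ) ≤ Real.exp (α*lam') := Real.exp_le_exp.2 (by nlinarith)
  have h5 : Real.exp (α*μ) * (ε*μ) ≤ Real.exp (α*lam') * (ε*lam') := by
    apply mul_le_mul h4 (by nlinarith) (by positivity) hA'.le
  have h6 : Real.exp (α*lam') * (ε*lam') ≤ δ/2 := by
    have hpos : (0:ℝ) < 2 * Real.exp (α*lam') * lam' := by positivity
    rw [le_div_iff₀ hpos] at hεle
    nlinarith
  have hAB : Real.exp (α*μ) * (1 - ε*μ) ≤ Real.exp (α*μ) * Real.exp (-(ε*μ)) :=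
    mul_le_mul_of_nonneg_left h2 hA.le
  rw [he1]
  nlinarith

lemma exists_lam {lam₀ L : ℝ} (h1 : 1 < lam₀) (hL : (1 + Real.log lam₀)/lam₀ < L) :
    ∃ lam, 1 < lam ∧ lam < lam₀ ∧ (1 + Real.log lam)/lam < L := by
  have hc : ContinuousAt (fun l : ℝ => (1 + Real.log l)/l) lam₀ := by
    apply ContinuousAt.div
    · exact continuousAt_const.add (Real.continuousAt_log (by linarith))
    · exact continuousAt_id
    · linarith
  have h3 : ∀ᶠ l in nhdsWithin lam₀ (Iio lam₀), (1 + Real.log l)/l < L :=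
    (hc.continuousWithinAt (s := Iio lam₀)).eventually_lt_const hL
  have h4 : ∀ᶠ l in nhdsWithin lam₀ (Iio lam₀), l ∈ Ioo 1 lam₀ :=
    eventually_of_mem (Ioo_mem_nhdsLT_of_mem ⟨h1, le_rfl⟩) fun l hl => hl
  obtain ⟨lam, hlt, hmem⟩ := (h3.and h4).exists
  exact ⟨lam, hmem.1, hmem.2, hlt⟩

set_option maxHeartbeats 2000000 in
lemma key_pos (m : ℕ) (hm : 1 ≤ m) (p τ : Fin m → ℝ → ℝ)
    (hp : ∀ i t, 0 ≤ t → 0 ≤ p i t) (hpc : ∀ i, Continuous (p i))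
    (hτ : ∀ i t, 0 ≤ t → τ i t < t) (hτc : ∀ i, Continuous (τ i))
    (hτtop : ∀ i, Tendsto (τ i) atTop atTop)
    (h : ℝ → ℝ)
    (hh : ∀ t, h t = sSup (Mset τ t))
    (a : ℕ → ℝ → ℝ → ℝ)
    (ha1 : ∀ t s, a 1 t s = Real.exp (∫ ζ in s..t, ∑ i, p i ζ))
    (harec : ∀ r t s, a (r + 1) t s =
      Real.exp (∫ ζ in s..t, ∑ i, p i ζ * a r ζ (τ i ζ)))
    (α : ℝ)
    (hα : α = liminf (fun t => ∫ s in h t..t, ∑ i, p i s) atTop)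
    (hα0 : 0 < α)
    (lam₀ : ℝ)
    (hlam : IsLeast {lam : ℝ | 0 < lam ∧ lam = Real.exp (α * lam)} lam₀)
    (r : ℕ) (hr : 1 ≤ r)
    (hsup : (1 + Real.log lam₀) / lam₀ <
      limsup (fun t => ∫ ζ in h t..t, ∑ i, p i ζ * a r (h ζ) (τ i ζ)) atTop)
    (x : ℝ → ℝ) (hx : ∀ t, 0 ≤ t → HasDerivAt x (-(∑ i, p i t * x (τ i t))) t)
    (T₀' : ℝ) (hT₀' : ∀ t, T₀' ≤ t → 0 < x t) : False := by
  have i₀ : Fin m := ⟨0, hm⟩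
  set G : ℝ → ℝ := fun ζ => ∑ i, p i ζ * a r (h ζ) (τ i ζ) with hG
  -- basic thresholds
  set T₀ := max T₀' 0 with hT₀def
  have xpos : ∀ t, T₀ ≤ t → 0 < x t := fun t ht => hT₀' t (le_trans (le_max_left _ _) ht)
  have hT₀0 : (0:ℝ) ≤ T₀ := le_max_right _ _
  have xcont : ∀ t : ℝ, 0 ≤ t → ContinuousAt x t := fun t ht => (hx t ht).continuousAt
  have evτ : ∀ C : ℝ, ∀ᶠ t in atTop, ∀ i, C ≤ τ i t := fun C =>
    eventually_all.2 fun i => (hτtop i).eventually_ge_atTop C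
  have dcont : ∀ u v : ℝ, 0 ≤ u → (∀ i, ∀ s ∈ Icc u v, (0:ℝ) ≤ τ i s) →
      ContinuousOn (fun s => (∑ i, p i s * x (τ i s))) (Icc u v) := by
    intro u v hu hτs
    apply continuousOn_finset_sum
    intro i _
    apply ContinuousOn.mul ((hpc i).continuousOn)
    intro s hs
    exact ((xcont _ (hτs i s hs)).comp (hτc i).continuousAt).continuousWithinAt
  -- Tm : monotonicity threshold
  obtain ⟨Tm₀, hTm₀⟩ := Filter.eventually_atTop.1 (evτ T₀)
  set Tm := max Tm₀ (max T₀ 0) with hTmdef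
  have hTmτ : ∀ t, Tm ≤ t → ∀ i, T₀ ≤ τ i t := fun t ht i =>
    hTm₀ t (le_trans (le_max_left _ _) ht) i
  have hTm0 : (0:ℝ) ≤ Tm := le_trans (le_max_right _ _) (le_max_right _ _)
  have hTmT₀ : T₀ ≤ Tm := le_trans (le_max_left _ _) (le_max_right _ _)
  have xanti : AntitoneOn x (Ici Tm) := by
    apply antitoneOn_of_deriv_nonpos (convex_Ici Tm)
    · exact fun t ht => (xcont t (le_trans hTm0 ht)).continuousWithinAt
    · intro t ht
      rw [interior_Ici] at ht
      exact ((hx t (le_trans hTm0 (le_of_lt ht))).differentiableAt).differentiableWithinAt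
    · intro t ht
      rw [interior_Ici] at ht
      have h0t : (0:ℝ) ≤ t := le_trans hTm0 (le_of_lt ht)
      rw [(hx t h0t).deriv, neg_nonpos]
      apply Finset.sum_nonneg
      intro i _
      exact mul_nonneg (hp i t h0t) (xpos _ (hTmτ t (le_of_lt ht) i)).le
  -- joint continuity of a k
  have acont : ∀ k : ℕ, 1 ≤ k → Continuous (fun pr : ℝ × ℝ => a k pr.1 pr.2) := by
    intro k hk
    induction k, hk using Nat.le_induction with
    | base =>
      have e : (fun pr : ℝ × ℝ => a 1 pr.1 pr.2)
          = fun pr : ℝ × ℝ => Real.exp (∫ ζ in pr.2..pr.1, ∑ i, p i ζ) :=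
        funext fun pr => ha1 _ _
      rw [e]
      exact Real.continuous_exp.comp (cont2_integral (continuous_finset_sum _ fun i _ => hpc i))
    | succ k hk ih =>
      have hq : Continuous fun ζ => ∑ i, p i ζ * a k ζ (τ i ζ) :=
        continuous_finset_sum _ fun i _ => (hpc i).mul (ih.comp (continuous_id.prodMk (hτc i)))
      have e : (fun pr : ℝ × ℝ => a (k+1) pr.1 pr.2)
          = fun pr : ℝ × ℝ => Real.exp (∫ ζ in pr.2..pr.1, ∑ i, p i ζ * a k ζ (τ i ζ)) :=
        funext fun pr => harec _ _ _
      rw [e]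
      exact Real.continuous_exp.comp (cont2_integral hq)
  have Gcont : ContinuousOn G (Ici 0) := by
    apply continuousOn_finset_sum
    intro i _
    apply ContinuousOn.mul ((hpc i).continuousOn)
    exact (acont r hr).comp_continuousOn
      ((h_contOn hm hh hτ hτc).prodMk (hτc i).continuousOn)
  have hapos : ∀ t s : ℝ, 0 < a r t s := by
    obtain ⟨j, hj⟩ : ∃ j, r = j + 1 := ⟨r - 1, by omega⟩
    intro t s; rw [hj, harec]; exact Real.exp_pos _
  -- Grönwall iterates
  have Egr : ∀ k : ℕ, 1 ≤ k → ∃ T, Tm ≤ T ∧ ∀ u v, T ≤ u → u ≤ v → a k v u * x v ≤ x u := by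
    intro k hk
    induction k, hk using Nat.le_induction with
    | base =>
      obtain ⟨Tb₀, hTb₀⟩ := Filter.eventually_atTop.1 (evτ Tm)
      refine ⟨max Tb₀ Tm, le_max_right _ _, fun u v hu huv => ?_⟩
      have huTb : Tb₀ ≤ u := le_trans (le_max_left _ _) hu
      have huTm : Tm ≤ u := le_trans (le_max_right _ _) hu
      have hu0 : (0:ℝ) ≤ u := le_trans hTm0 huTm
      have hτmem : ∀ i, ∀ s ∈ Icc u v, Tm ≤ τ i s := fun i s hs =>
        hTb₀ s (le_trans huTb hs.1) i
      rw [ha1]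
      refine log_est huv (fun s hs => hx s (le_trans hu0 hs.1))
        (fun s hs => xpos s (le_trans hTmT₀ (le_trans huTm hs.1)))
        ((dcont u v hu0 (fun i s hs => le_trans hTm0 (hτmem i s hs))).neg)
        ((continuous_finset_sum _ fun i _ => hpc i).continuousOn) ?_
      intro s hs
      have h0s : (0:ℝ) ≤ s := le_trans hu0 hs.1
      rw [neg_le_neg_iff]
      calc (∑ i, p i s) * x s = ∑ i, p i s * x s := by rw [Finset.sum_mul]
        _ ≤ ∑ i, p i s * x (τ i s) := by
            apply Finset.sum_le_sum
            intro i _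
            exact mul_le_mul_of_nonneg_left
              (xanti (mem_Ici.2 (hτmem i s hs)) (mem_Ici.2 (le_trans huTm hs.1))
                (hτ i s h0s).le) (hp i s h0s)
    | succ k hk ih =>
      obtain ⟨Tk, hTkm, hTk⟩ := ih
      obtain ⟨Tk₀, hTk₀⟩ := Filter.eventually_atTop.1 (evτ Tk)
      refine ⟨max Tk₀ Tk, le_trans hTkm (le_max_right _ _), fun u v hu huv => ?_⟩
      have huTk : Tk ≤ u := le_trans (le_max_right _ _) hu
      have huTm : Tm ≤ u := le_trans hTkm huTk
      have hu0 : (0:ℝ) ≤ u := le_trans hTm0 huTm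
      have hτmem : ∀ i, ∀ s ∈ Icc u v, Tk ≤ τ i s := fun i s hs =>
        hTk₀ s (le_trans (le_trans (le_max_left _ _) hu) hs.1) i
      rw [harec]
      refine log_est huv (fun s hs => hx s (le_trans hu0 hs.1))
        (fun s hs => xpos s (le_trans hTmT₀ (le_trans huTm hs.1)))
        ((dcont u v hu0 (fun i s hs => le_trans hTm0 (le_trans hTkm (hτmem i s hs)))).neg)
        ((continuous_finset_sum _ fun i _ =>
          (hpc i).mul ((acont k hk).comp (continuous_id.prodMk (hτc i)))).continuousOn) ?_
      intro s hs
      have h0s : (0:ℝ) ≤ s := le_trans hu0 hs.1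
      rw [neg_le_neg_iff]
      calc (∑ i, p i s * a k s (τ i s)) * x s = ∑ i, p i s * (a k s (τ i s) * x s) := by
            rw [Finset.sum_mul]; congr 1; funext i; ring
        _ ≤ ∑ i, p i s * x (τ i s) := by
            apply Finset.sum_le_sum
            intro i _
            exact mul_le_mul_of_nonneg_left
              (hTk (τ i s) s (hτmem i s hs) (hτ i s h0s).le) (hp i s h0s)
  -- the λ₀-ratio lemma
  have Elam : ∀ lam', 1 < lam' → lam' < lam₀ →
      ∃ T, Tm ≤ T ∧ ∀ t, T ≤ t → lam' * x t ≤ x (h t) := by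
    intro lam' hl1 hll
    have hfc : ContinuousOn (fun s : ℝ => Real.exp (α * s) - s) (Icc 1 lam') :=
      ((Real.continuous_exp.comp (continuous_const.mul continuous_id)).sub continuous_id).continuousOn
    obtain ⟨s₀, hs₀mem, hs₀min⟩ :=
      isCompact_Icc.exists_isMinOn ⟨1, by constructor <;> linarith⟩ hfc
    set δ := Real.exp (α * s₀) - s₀ with hδdef
    have hδpos : 0 < δ := by
      have := root_lt hα0 hlam hs₀mem.1 (lt_of_le_of_lt hs₀mem.2 hll)
      linarith
    have hδle : ∀ s, 1 ≤ s → s ≤ lam' → s + δ ≤ Real.exp (α * s) := by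
      intro s hs1 hs2
      have hmin := isMinOn_iff.1 hs₀min s ⟨hs1, hs2⟩
      rw [hδdef]
      linarith
    set ε := min (α/2) (δ / (2 * Real.exp (α * lam') * lam')) with hεdef
    have hεpos : 0 < ε := lt_min (by linarith) (by positivity)
    have hεα : ε ≤ α/2 := min_le_left _ _
    have hεδ : ε ≤ δ / (2*Real.exp (α*lam')*lam') := min_le_right _ _
    have evint := liminf_extract hα hα0 hεpos
    have iter : ∀ n : ℕ, ∃ T, Tm ≤ T ∧ ∀ t, T ≤ t →
        min lam' (1 + n * (δ/2)) * x t ≤ x (h t) := by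
      intro n
      induction n with
      | zero =>
        obtain ⟨T₁, hT₁⟩ := Filter.eventually_atTop.1
          (((h_tendsto hh hτ hτtop i₀).eventually_ge_atTop Tm).and (eventually_ge_atTop (0:ℝ)))
        refine ⟨max T₁ Tm, le_max_right _ _, fun t ht => ?_⟩
        obtain ⟨hhtm, h0t⟩ := hT₁ t (le_trans (le_max_left _ _) ht)
        have hb : min lam' (1 + (0:ℕ) * (δ/2)) = 1 := by
          push_cast
          rw [zero_mul, add_zero]
          exact min_eq_right hl1.le
        rw [hb, one_mul]
        exact xanti (mem_Ici.2 hhtm) (mem_Ici.2 (le_trans (le_max_right _ _) ht))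
          (h_le hh hτ i₀ h0t)
      | succ n ihn =>
        obtain ⟨Tn, hTnm, hn⟩ := ihn
        set μ := min lam' (1 + n * (δ/2)) with hμdef
        have hμ1 : 1 ≤ μ := le_min hl1.le (by
          have hn0 : (0:ℝ) ≤ (n:ℝ) := Nat.cast_nonneg n
          nlinarith)
        have hμl : μ ≤ lam' := min_le_left _ _
        obtain ⟨Tq, hTq⟩ := Filter.eventually_atTop.1 (evτ Tm)
        obtain ⟨T₂, hT₂⟩ := Filter.eventually_atTop.1
          ((((h_tendsto hh hτ hτtop i₀).eventually_ge_atTop (max (max Tn Tq) Tm)).and evint).and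
            (eventually_ge_atTop (0:ℝ)))
        refine ⟨max T₂ Tm, le_max_right _ _, fun t ht => ?_⟩
        obtain ⟨⟨hht, hint⟩, h0t⟩ := hT₂ t (le_trans (le_max_left _ _) ht)
        have hhtTn : Tn ≤ h t := le_trans (le_trans (le_max_left _ _) (le_max_left _ _)) hht
        have hhtTq : Tq ≤ h t := le_trans (le_trans (le_max_right _ _) (le_max_left _ _)) hht
        have hhtTm : Tm ≤ h t := le_trans (le_max_right _ _) hht
        have hht0 : (0:ℝ) ≤ h t := le_trans hTm0 hhtTm
        have hbt : h t ≤ t := h_le hh hτ i₀ h0t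
        have hstep : Real.exp (∫ ζ in (h t)..t, μ * (∑ i, p i ζ)) * x t ≤ x (h t) := by
          refine log_est hbt (fun s hs => hx s (le_trans hht0 hs.1))
            (fun s hs => xpos s (le_trans hTmT₀ (le_trans hhtTm hs.1)))
            ((dcont (h t) t hht0 (fun i s hs =>
              le_trans hTm0 (hTq s (le_trans hhtTq hs.1) i))).neg)
            ((continuous_const.mul (continuous_finset_sum _ fun i _ => hpc i)).continuousOn) ?_
          intro s hs
          have h0s : (0:ℝ) ≤ s := le_trans hht0 hs.1
          have hsTm : Tm ≤ s := le_trans hhtTm hs.1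
          rw [neg_le_neg_iff]
          have hτTm : ∀ i, Tm ≤ τ i s := fun i => hTq s (le_trans hhtTq hs.1) i
          calc μ * (∑ i, p i s) * x s = ∑ i, p i s * (μ * x s) := by
                rw [Finset.mul_sum, Finset.sum_mul]; congr 1; funext i; ring
            _ ≤ ∑ i, p i s * x (τ i s) := by
                apply Finset.sum_le_sum
                intro i _
                apply mul_le_mul_of_nonneg_left _ (hp i s h0s)
                have h1 : μ * x s ≤ x (h s) := hn s (le_trans hhtTn hs.1)
                have h2 : x (h s) ≤ x (τ i s) :=
                  xanti (mem_Ici.2 (hτTm i)) (mem_Ici.2 (le_trans (hτTm i) (h_ge hh hτ i h0s)))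
                    (h_ge hh hτ i h0s)
                linarith
        have hμint : Real.exp (μ * (α - ε)) ≤ Real.exp (∫ ζ in (h t)..t, μ * (∑ i, p i ζ)) := by
          rw [intervalIntegral.integral_const_mul]
          apply Real.exp_le_exp.2
          exact mul_le_mul_of_nonneg_left hint.le (by linarith)
        have hkey : min lam' (1 + ((n:ℝ)+1) * (δ/2)) ≤ Real.exp (μ * (α - ε)) := by
          have hk := karith (α := α) (ε := ε) (δ := δ) (lam' := lam') (μ := μ)
            hα0 hμ1 hμl hδpos (hδle μ hμ1 hμl) hεpos hεδ
          have hmin : min lam' (1 + ((n:ℝ)+1) * (δ/2)) ≤ μ + δ/2 := by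
            rcases le_total lam' (1 + (n:ℝ) * (δ/2)) with hc | hc
            · calc min lam' (1 + ((n:ℝ)+1) * (δ/2)) ≤ lam' := min_le_left _ _
                _ = μ := (min_eq_left hc).symm
                _ ≤ μ + δ/2 := by linarith
            · calc min lam' (1 + ((n:ℝ)+1) * (δ/2)) ≤ 1 + ((n:ℝ)+1) * (δ/2) := min_le_right _ _
                _ = (1 + (n:ℝ) * (δ/2)) + δ/2 := by ring
                _ = μ + δ/2 := by rw [hμdef, min_eq_right hc]
          calc min lam' (1 + ((n:ℝ)+1) * (δ/2)) ≤ μ + δ/2 := hmin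
            _ ≤ Real.exp ((α - ε) * μ) := hk
            _ = Real.exp (μ * (α - ε)) := by rw [mul_comm]
        push_cast
        calc min lam' (1 + ((n:ℝ)+1) * (δ/2)) * x t
            ≤ Real.exp (∫ ζ in (h t)..t, μ * (∑ i, p i ζ)) * x t := by
              apply mul_le_mul_of_nonneg_right _ (xpos t (le_trans hTmT₀ (le_trans hhtTm hbt))).le
              exact le_trans hkey hμint
          _ ≤ x (h t) := hstep
    obtain ⟨N, hN⟩ := exists_nat_ge ((lam' - 1) / (δ/2))
    obtain ⟨T, hTm', hT⟩ := iter N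
    refine ⟨T, hTm', fun t ht => ?_⟩
    have hmin : min lam' (1 + (N:ℝ) * (δ/2)) = lam' := by
      apply min_eq_left
      rw [div_le_iff₀ (by linarith : (0:ℝ) < δ/2)] at hN
      linarith
    have := hT t ht
    rw [hmin] at this
    exact this
  -- select λ < λ₀
  have hlam0pos : 0 < lam₀ := hlam.1.1
  have hlam1 : 1 < lam₀ := by
    rw [hlam.1.2]
    exact Real.one_lt_exp_iff.2 (mul_pos hα0 hlam0pos)
  obtain ⟨lam, hlam1', hlamlt, hlamL⟩ := exists_lam hlam1 hsup
  have hlampos : (0:ℝ) < lam := by linarith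
  obtain ⟨Tlam, hTlamm, hlamev⟩ := Elam lam hlam1' hlamlt
  obtain ⟨Te, hTem, hE⟩ := Egr r hr
  -- eventual nonnegativity of F
  have evF0 : ∀ᶠ t in atTop, 0 ≤ ∫ ζ in (h t)..t, G ζ := by
    filter_upwards [(h_tendsto hh hτ hτtop i₀).eventually_ge_atTop 0,
      eventually_ge_atTop (0:ℝ)] with t h1 h2
    apply intervalIntegral.integral_nonneg (h_le hh hτ i₀ h2)
    intro ζ hζ
    apply Finset.sum_nonneg
    intro i _
    exact mul_nonneg (hp i ζ (le_trans h1 hζ.1)) (hapos _ _).le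
  -- eventual upper bound of F
  have evFle : ∀ᶠ t in atTop, (∫ ζ in (h t)..t, G ζ) ≤ (1 + Real.log lam)/lam := by
    obtain ⟨Tee, hTee⟩ := Filter.eventually_atTop.1 (evτ Te)
    filter_upwards [(h_tendsto hh hτ hτtop i₀).eventually_ge_atTop
        (max (max Te Tlam) (max Tm Tee)), eventually_ge_atTop (0:ℝ)] with t hht h0t
    by_contra hFc
    push_neg at hFc
    have hbTe : Te ≤ h t := le_trans (le_trans (le_max_left _ _) (le_max_left _ _)) hht
    have hbTlam : Tlam ≤ h t := le_trans (le_trans (le_max_right _ _) (le_max_left _ _)) hht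
    have hbTm : Tm ≤ h t := le_trans (le_trans (le_max_left _ _) (le_max_right _ _)) hht
    have hbTee : Tee ≤ h t := le_trans (le_trans (le_max_right _ _) (le_max_right _ _)) hht
    have hb0 : (0:ℝ) ≤ h t := le_trans hTm0 hbTm
    have hbt : h t ≤ t := h_le hh hτ i₀ h0t
    have hxb : 0 < x (h t) := xpos _ (le_trans hTmT₀ hbTm)
    have hxt : 0 < x t := xpos t (le_trans (le_trans hTmT₀ hbTm) hbt)
    -- facts on Icc (h t) t
    have hfacts : ∀ ζ ∈ Icc (h t) t, (0:ℝ) ≤ ζ ∧ (∀ i, Te ≤ τ i ζ) ∧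
        h ζ ≤ h t ∧ Tm ≤ h ζ ∧ (∀ i, a r (h ζ) (τ i ζ) * x (h ζ) ≤ x (τ i ζ)) ∧
        x (h t) ≤ x (h ζ) ∧ lam * x ζ ≤ x (h ζ) := by
      intro ζ hζ
      have h0ζ : (0:ℝ) ≤ ζ := le_trans hb0 hζ.1
      have hτTe : ∀ i, Te ≤ τ i ζ := fun i => hTee ζ (le_trans hbTee hζ.1) i
      have hhζle : h ζ ≤ h t := h_mono hh hτ i₀ h0ζ hζ.2
      have hhζTm : Tm ≤ h ζ := le_trans (le_trans hTem (hτTe i₀)) (h_ge hh hτ i₀ h0ζ)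
      refine ⟨h0ζ, hτTe, hhζle, hhζTm, fun i => hE (τ i ζ) (h ζ) (hτTe i) (h_ge hh hτ i h0ζ),
        xanti (mem_Ici.2 hhζTm) (mem_Ici.2 hbTm) hhζle, hlamev ζ (le_trans hbTlam hζ.1)⟩
    have GcontIcc : ContinuousOn G (Icc (h t) t) :=
      Gcont.mono (fun ζ hζ => le_trans hb0 hζ.1)
    have hGint : IntervalIntegrable G volume (h t) t := by
      apply ContinuousOn.intervalIntegrable
      rwa [uIcc_of_le hbt]
    -- IVT point
    have Φc : ContinuousOn (fun u => ∫ ζ in u..t, G ζ) (Icc (h t) t) := by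
      have hint : IntegrableOn G (Icc (h t) t) := GcontIcc.integrableOn_Icc
      have e1 : ∀ u ∈ Icc (h t) t,
          (∫ ζ in u..t, G ζ) = (∫ ζ in (h t)..t, G ζ) - ∫ ζ in (h t)..u, G ζ := by
        intro u hu
        rw [eq_sub_iff_add_eq, add_comm]
        exact intervalIntegral.integral_add_adjacent_intervals
          (by apply ContinuousOn.intervalIntegrable
              rw [uIcc_of_le hu.1]
              exact GcontIcc.mono (fun ζ hζ => ⟨hζ.1, le_trans hζ.2 hu.2⟩))
          (by apply ContinuousOn.intervalIntegrable
              rw [uIcc_of_le hu.2]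
              exact GcontIcc.mono (fun ζ hζ => ⟨le_trans hu.1 hζ.1, hζ.2⟩))
      apply ContinuousOn.congr _ e1
      apply ContinuousOn.sub continuousOn_const
      have := intervalIntegral.continuousOn_primitive_interval
        (f := G) (a := h t) (b := t) (μ := volume) (by rwa [uIcc_of_le hbt])
      rwa [uIcc_of_le hbt] at this
    have hloglam : 0 ≤ Real.log lam := Real.log_nonneg hlam1'.le
    have h1lam : 1/lam ≤ (1 + Real.log lam)/lam := by
      rw [div_le_div_iff₀ hlampos hlampos]
      nlinarith
    -- IVT: choose ts with ∫ ts..t G = 1/lam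
    obtain ⟨ts, htsmem, hts⟩ := intermediate_value_Icc' hbt Φc
      (⟨by simp only [intervalIntegral.integral_same]; positivity,
        le_of_lt (lt_of_le_of_lt h1lam hFc)⟩ :
        (1/lam : ℝ) ∈ Icc ((fun u => ∫ ζ in u..t, G ζ) t) ((fun u => ∫ ζ in u..t, G ζ) (h t)))
    simp only at hts
    have hts0 : (0:ℝ) ≤ ts := le_trans hb0 htsmem.1
    have htst : ts ≤ t := htsmem.2
    have hxts : 0 < x ts := xpos ts (le_trans (le_trans hTmT₀ hbTm) htsmem.1)
    have int2 : IntervalIntegrable G volume ts t := by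
      apply ContinuousOn.intervalIntegrable
      rw [uIcc_of_le htst]
      exact GcontIcc.mono (fun ζ hζ => ⟨le_trans htsmem.1 hζ.1, hζ.2⟩)
    have int1 : IntervalIntegrable G volume (h t) ts := by
      apply ContinuousOn.intervalIntegrable
      rw [uIcc_of_le htsmem.1]
      exact GcontIcc.mono (fun ζ hζ => ⟨hζ.1, le_trans hζ.2 htst⟩)
    -- Part 1 : x (h t) * (1/lam) ≤ x ts - x t
    have hFTC : ∫ ζ in ts..t, -(∑ i, p i ζ * x (τ i ζ)) = x t - x ts := by
      apply intervalIntegral.integral_eq_sub_of_hasDerivAt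
      · intro s hs
        rw [uIcc_of_le htst] at hs
        exact hx s (le_trans hts0 hs.1)
      · apply ContinuousOn.intervalIntegrable
        rw [uIcc_of_le htst]
        exact (dcont ts t hts0 (fun i s hs => le_trans (le_trans hTm0 hTem)
          ((hfacts s ⟨le_trans htsmem.1 hs.1, hs.2⟩).2.1 i))).neg
    have hFTC' : ∫ ζ in ts..t, (∑ i, p i ζ * x (τ i ζ)) = x ts - x t := by
      have h := hFTC
      rw [intervalIntegral.integral_neg] at h
      linarith
    have hpart1 : x (h t) * (1/lam) ≤ x ts - x t := by
      rw [← hFTC']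
      have hmono : ∫ ζ in ts..t, x (h t) * G ζ ≤ ∫ ζ in ts..t, (∑ i, p i ζ * x (τ i ζ)) := by
        apply intervalIntegral.integral_mono_on htst
        · apply ContinuousOn.intervalIntegrable
          rw [uIcc_of_le htst]
          exact continuousOn_const.mul (GcontIcc.mono (fun ζ hζ => ⟨le_trans htsmem.1 hζ.1, hζ.2⟩))
        · apply ContinuousOn.intervalIntegrable
          rw [uIcc_of_le htst]
          exact dcont ts t hts0 (fun i s hs => le_trans (le_trans hTm0 hTem)
            ((hfacts s ⟨le_trans htsmem.1 hs.1, hs.2⟩).2.1 i))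
        · intro ζ hζ
          obtain ⟨h0ζ, hτTe, hhζle, hhζTm, hEζ, hxhζ, hlamζ⟩ :=
            hfacts ζ ⟨le_trans htsmem.1 hζ.1, hζ.2⟩
          simp only [hG, Finset.mul_sum]
          apply Finset.sum_le_sum
          intro i _
          have k2 : a r (h ζ) (τ i ζ) * x (h t) ≤ x (τ i ζ) :=
            le_trans (mul_le_mul_of_nonneg_left hxhζ (hapos _ _).le) (hEζ i)
          calc x (h t) * (p i ζ * a r (h ζ) (τ i ζ))
              = p i ζ * (a r (h ζ) (τ i ζ) * x (h t)) := by ring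
            _ ≤ p i ζ * x (τ i ζ) := mul_le_mul_of_nonneg_left k2 (hp i ζ h0ζ)
      rw [intervalIntegral.integral_const_mul, hts] at hmono
      exact hmono
    -- Part 2
    have hpart2 : Real.exp (∫ ζ in (h t)..ts, lam * G ζ) * x ts ≤ x (h t) := by
      refine log_est htsmem.1 (fun s hs => hx s (le_trans hb0 hs.1))
        (fun s hs => xpos s (le_trans (le_trans hTmT₀ hbTm) hs.1))
        ((dcont (h t) ts hb0 (fun i s hs => le_trans (le_trans hTm0 hTem)
          ((hfacts s ⟨hs.1, le_trans hs.2 htst⟩).2.1 i))).neg)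
        (continuousOn_const.mul (GcontIcc.mono (fun ζ hζ => ⟨hζ.1, le_trans hζ.2 htst⟩))) ?_
      intro ζ hζ
      obtain ⟨h0ζ, hτTe, hhζle, hhζTm, hEζ, hxhζ, hlamζ⟩ := hfacts ζ ⟨hζ.1, le_trans hζ.2 htst⟩
      rw [neg_le_neg_iff]
      calc lam * G ζ * x ζ = ∑ i, p i ζ * (a r (h ζ) (τ i ζ) * (lam * x ζ)) := by
            simp only [hG, Finset.mul_sum, Finset.sum_mul]
            congr 1
            funext i
            ring
        _ ≤ ∑ i, p i ζ * x (τ i ζ) := by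
            apply Finset.sum_le_sum
            intro i _
            apply mul_le_mul_of_nonneg_left _ (hp i ζ h0ζ)
            calc a r (h ζ) (τ i ζ) * (lam * x ζ) ≤ a r (h ζ) (τ i ζ) * x (h ζ) :=
                  mul_le_mul_of_nonneg_left hlamζ (hapos _ _).le
              _ ≤ x (τ i ζ) := hEζ i
    have hsplit : (∫ ζ in (h t)..ts, G ζ) + (∫ ζ in ts..t, G ζ) = ∫ ζ in (h t)..t, G ζ :=
      intervalIntegral.integral_add_adjacent_intervals int1 int2
    have h7 : Real.log lam / lam < ∫ ζ in (h t)..ts, G ζ := by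
      rw [← hsplit, hts] at hFc
      have heq : (1 + Real.log lam)/lam = Real.log lam/lam + 1/lam := by ring
      linarith
    have h8 : lam < Real.exp (∫ ζ in (h t)..ts, lam * G ζ) := by
      rw [intervalIntegral.integral_const_mul]
      have hlt : Real.log lam < lam * ∫ ζ in (h t)..ts, G ζ := by
        rw [div_lt_iff₀ hlampos] at h7
        linarith
      calc lam = Real.exp (Real.log lam) := (Real.exp_log hlampos).symm
        _ < _ := Real.exp_lt_exp.2 hlt
    have h9 : lam * x ts < x (h t) :=
      lt_of_lt_of_le (mul_lt_mul_of_pos_right h8 hxts) hpart2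
    have h10 : x (h t) ≤ lam * (x ts - x t) := by
      have he : x (h t) * (1/lam) = x (h t) / lam := by ring
      rw [he, div_le_iff₀ hlampos] at hpart1
      linarith [hpart1]
    have h11 : lam * (x ts - x t) = lam * x ts - lam * x t := by ring
    rw [h11] at h10
    linarith [mul_pos hlampos hxt]

  have hfin := limsup_le_of_eventually evF0 evFle
  exact absurd (lt_of_lt_of_le hlamL hfin) (lt_irrefl _)

/-- Main theorem: with `h` the running maximum of the delays,
`a_r` the iterated exponential functionals,
`0 < α := liminf ∫_{h(t)}^t ∑ pᵢ ≤ 1/e` and `λ₀` the smaller root of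
`λ = e^{αλ}`, if for some `r ∈ ℕ`
`limsup ∫_{h(t)}^t ∑ pᵢ(ζ) a_r(h(ζ), τᵢ(ζ)) dζ > (1 + ln λ₀)/λ₀`, then every
solution of `x'(t) + ∑ pᵢ(t) x(τᵢ(t)) = 0` oscillates. -/
theorem stmt13 (m : ℕ) (hm : 1 ≤ m) (p τ : Fin m → ℝ → ℝ)
    (hp : ∀ i t, 0 ≤ t → 0 ≤ p i t) (hpc : ∀ i, Continuous (p i))
    (hτ : ∀ i t, 0 ≤ t → τ i t < t) (hτc : ∀ i, Continuous (τ i))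
    (hτtop : ∀ i, Tendsto (τ i) atTop atTop)
    (h : ℝ → ℝ)
    (hh : ∀ t, h t = sSup {y : ℝ | ∃ i : Fin m, ∃ s, 0 ≤ s ∧ s ≤ t ∧ y = τ i s})
    (a : ℕ → ℝ → ℝ → ℝ)
    (ha1 : ∀ t s, a 1 t s = Real.exp (∫ ζ in s..t, ∑ i, p i ζ))
    (harec : ∀ r t s, a (r + 1) t s =
      Real.exp (∫ ζ in s..t, ∑ i, p i ζ * a r ζ (τ i ζ)))
    (α : ℝ)
    (hα : α = liminf (fun t => ∫ s in h t..t, ∑ i, p i s) atTop)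
    (hα0 : 0 < α) (hα1 : α ≤ 1 / Real.exp 1)
    (lam₀ : ℝ)
    (hlam : IsLeast {lam : ℝ | 0 < lam ∧ lam = Real.exp (α * lam)} lam₀)
    (r : ℕ) (hr : 1 ≤ r)
    (hsup : (1 + Real.log lam₀) / lam₀ <
      limsup (fun t => ∫ ζ in h t..t, ∑ i, p i ζ * a r (h ζ) (τ i ζ)) atTop) :
    ∀ x : ℝ → ℝ, (∀ t, 0 ≤ t → HasDerivAt x (-(∑ i, p i t * x (τ i t))) t) →
      (¬ ∃ T, ∀ t, T ≤ t → 0 < x t) ∧ (¬ ∃ T, ∀ t, T ≤ t → x t < 0) := by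
  intro x hx
  constructor
  · rintro ⟨T, hT⟩
    exact key_pos m hm p τ hp hpc hτ hτc hτtop h hh a ha1 harec α hα hα0 lam₀ hlam r hr hsup
      x hx T hT
  · rintro ⟨T, hT⟩
    refine key_pos m hm p τ hp hpc hτ hτc hτtop h hh a ha1 harec α hα hα0 lam₀ hlam r hr hsup
      (fun t => -(x t)) ?_ T (fun t ht => neg_pos.2 (hT t ht))
    intro t ht
    have hneg := (hx t ht).neg
    refine hneg.congr_deriv ?_
    simp [mul_neg]
end

section
/- For 0 < α ≤ 1/e with λ₀ the smaller root of λ = e^{αλ}, one has (1 + ln λ₀)/λ₀ ≤ 1 − (1 − α − √(1 − 2α − α²))/2 for all α ∈ (0, 1/e] where the square root is defined (α ≤ √2 − 1); i.e., the bound (1+ln λ₀)/λ₀ is sharper than the classical bound 1 − (1−α−√(1−2α−α²))/2. -/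
open Real

/-- For `0 < α ≤ 1/e` with `λ₀` the smaller root of
`λ = e^{αλ}`, one has
`(1 + ln λ₀)/λ₀ ≤ 1 − (1 − α − √(1 − 2α − α²))/2`. -/
theorem stmt16 (α lam₀ : ℝ) (hα0 : 0 < α) (hα1 : α ≤ 1 / Real.exp 1)
    (hαs : α ≤ Real.sqrt 2 - 1)
    (hlam : IsLeast {lam : ℝ | 0 < lam ∧ lam = Real.exp (α * lam)} lam₀) :
    (1 + Real.log lam₀) / lam₀ ≤
      1 - (1 - α - Real.sqrt (1 - 2 * α - α ^ 2)) / 2 := by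
  obtain ⟨⟨hpos, heq⟩, _⟩ := hlam
  set s := Real.sqrt (1 - 2 * α - α ^ 2) with hs
  have hnn : 0 ≤ 1 - 2 * α - α ^ 2 := by
    have h2 : α + 1 ≤ Real.sqrt 2 := by linarith
    have := Real.sq_sqrt (by norm_num : (0:ℝ) ≤ 2)
    nlinarith [Real.sqrt_nonneg 2, sq_nonneg (α + 1)]
  have hs0 : 0 ≤ s := Real.sqrt_nonneg _
  have hs2 : s ^ 2 = 1 - 2 * α - α ^ 2 := Real.sq_sqrt hnn
  have hlog : Real.log lam₀ = α * lam₀ := by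
    have := congrArg Real.log heq
    rwa [Real.log_exp] at this
  have key : 1 + α * lam₀ + (α * lam₀) ^ 2 / 2 ≤ lam₀ := by
    have := Real.quadratic_le_exp_of_nonneg
      (x := α * lam₀) (by positivity)
    linarith [heq ▸ this]
  rw [hlog, div_le_iff₀ hpos]
  nlinarith [sq_nonneg (lam₀ * s - (2 - lam₀ * (1 - α))), mul_nonneg hpos.le hs0,
    mul_pos hpos hpos, sq_nonneg (α * lam₀)]
end

section
/- For the equation x'(t) + (27/200) x(τ₁(t)) + (27/200) x(τ₂(t)) = 0 with τ₁ the piecewise linear delay above and τ₂(t) = τ₁(t) − 0.1, one has α = liminf_{t→∞} ∫_{τ(t)}^t (p₁(s)+p₂(s)) ds = 27/100 < 1/e, where τ(t) = max(τ₁(t), τ₂(t)) = τ₁(t). -/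
open Real Filter intervalIntegral

/-- For `x'(t) + (27/200) x(τ₁(t)) + (27/200) x(τ₂(t)) = 0`
with `τ₁` the piecewise linear delay and `τ₂ = τ₁ − 0.1`, one has
`α = liminf ∫_{τ(t)}^t (p₁ + p₂) = 27/100 < 1/e`, where
`τ(t) = max(τ₁(t), τ₂(t)) = τ₁(t)`. -/
theorem stmt18 (τ₁ τ₂ : ℝ → ℝ)
    (hτ₁ : ∀ k : ℕ,
      (∀ t ∈ Set.Icc (3 * (k : ℝ)) (3 * k + 1), τ₁ t = t - 1) ∧
      (∀ t ∈ Set.Icc (3 * (k : ℝ) + 1) (3 * k + 2),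
        τ₁ t = -3 * t + 12 * k + 3) ∧
      (∀ t ∈ Set.Icc (3 * (k : ℝ) + 2) (3 * k + 3),
        τ₁ t = 5 * t - 12 * k - 13))
    (hτ₂ : ∀ t, τ₂ t = τ₁ t - 0.1) :
    (∀ t, 0 ≤ t → max (τ₁ t) (τ₂ t) = τ₁ t) ∧
    liminf (fun t => ∫ s in τ₁ t..t, ((27 : ℝ) / 200 + 27 / 200)) atTop =
      27 / 100 ∧ (27 : ℝ) / 100 < 1 / Real.exp 1 := by
  have hmax : ∀ t, 0 ≤ t → max (τ₁ t) (τ₂ t) = τ₁ t := by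
    intro t _
    rw [hτ₂ t, max_eq_left]
    norm_num
  -- the integrand function
  set f : ℝ → ℝ := fun t => ∫ s in τ₁ t..t, ((27 : ℝ) / 200 + 27 / 200) with hf
  have hfval : ∀ t, f t = (t - τ₁ t) * (27 / 100) := by
    intro t
    simp [hf, intervalIntegral.integral_const, smul_eq_mul]
    ring
  -- lower bound: for t ≥ 0, t - τ₁ t ≥ 1
  have hlb : ∀ t : ℝ, 0 ≤ t → 1 ≤ t - τ₁ t := by
    intro t ht
    set k : ℕ := ⌊t / 3⌋₊ with hk
    have h1 : (k : ℝ) ≤ t / 3 := Nat.floor_le (by positivity)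
    have h2 : t / 3 < k + 1 := Nat.lt_floor_add_one _
    obtain ⟨hA, hB, hC⟩ := hτ₁ k
    rcases le_or_gt t (3 * k + 1) with h | h
    · rw [hA t ⟨by linarith, h⟩]; linarith
    · rcases le_or_gt t (3 * k + 2) with h' | h'
      · rw [hB t ⟨le_of_lt h, h'⟩]; linarith
      · rw [hC t ⟨le_of_lt h', by linarith⟩]; linarith
  have hev : ∀ᶠ t in atTop, 27 / 100 ≤ f t := by
    filter_upwards [eventually_ge_atTop (0 : ℝ)] with t ht
    rw [hfval t]
    nlinarith [hlb t ht]
  have hfreq : ∃ᶠ t in atTop, f t ≤ 27 / 100 := by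
    have htend : Tendsto (fun k : ℕ => 3 * (k : ℝ)) atTop atTop := by
      apply Tendsto.const_mul_atTop (by norm_num : (0:ℝ) < 3)
      exact tendsto_natCast_atTop_atTop
    apply htend.frequently
    apply Filter.Frequently.of_forall
    intro k
    have hA := (hτ₁ k).1 (3 * k) ⟨le_refl _, by linarith⟩
    rw [hfval, hA]
    ring_nf
    norm_num
  refine ⟨hmax, ?_, ?_⟩
  · apply le_antisymm
    · exact liminf_le_of_frequently_le hfreq (isBoundedUnder_of_eventually_ge hev)
    · apply le_liminf_of_le
      · exact ⟨27 / 100, fun a ha => by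
          rcases ((eventually_map.mp ha).and_frequently hfreq).exists with ⟨t, h1, h2⟩
          linarith⟩
      · exact hev
  · rw [lt_div_iff₀ (exp_pos 1)]
    have := Real.exp_one_lt_d9
    nlinarith
end
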